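/- arXiv:1908.11182 — 4 statements merged into one kernel-verified Lean document; each statement's English description precedes it below -/
import Mathlib

section
/- Let A be a positive operator on H, B = diag(A,A), and X, Y ∈ B_A(H). Then w_B([[0,X],[Y,0]])² ≤ (1/2)·max{‖XX^{♯A} + Y^{♯A}Y‖_A, ‖X^{♯A}X + YY^{♯A}‖_A}. -/
noncomputable section
open Complex ContinuousLinearMap

variable {H : Type*} [NormedAddCommGroup H] [InnerProductSpace ℂ H] [CompleteSpace H]

/-- The `A`-inner ℂ product `⟨x,y⟩_A = ⟨Ax,y⟩`. -/
def innA (A : H →L[ℂ] H) (x y : H) : ℂ := inner ℂ (A x) y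

/-- The `A`-seminorm of a vector, `‖x‖_A = √⟨x,x⟩_A`. -/
def vnormA (A : H →L[ℂ] H) (x : H) : ℝ := Real.sqrt (innA A x x).re

/-- The `A`-numerical radius `w_A(T) = sup{|⟨Tx,x⟩_A| : ‖x‖_A = 1}`. -/
def wA (A T : H →L[ℂ] H) : ℝ :=
  sSup {r : ℝ | ∃ x : H, vnormA A x = 1 ∧ r = ‖innA A (T x) x‖}

/-- The `A`-operator seminorm, `sup` over `A`-unit vectors in the closure of the range of `A`. -/
def opNormA (A T : H →L[ℂ] H) : ℝ :=
  sSup {r : ℝ | ∃ x : H, x ∈ closure (Set.range A) ∧ vnormA A x = 1 ∧ r = vnormA A (T x)}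

/-- The `A`-operator seminorm, `sup` over all `A`-unit vectors (used when `A > 0`). -/
def opNormA' (A T : H →L[ℂ] H) : ℝ :=
  sSup {r : ℝ | ∃ x : H, vnormA A x = 1 ∧ r = vnormA A (T x)}

/-- The `A`-Crawford number `c_A(T) = inf{|⟨Tx,x⟩_A| : ‖x‖_A = 1}`. -/
def cA (A T : H →L[ℂ] H) : ℝ :=
  sInf {r : ℝ | ∃ x : H, vnormA A x = 1 ∧ r = ‖innA A (T x) x‖}

/-- The `A`-minimum modulus `m_A(T) = inf{‖Tx‖_A : ‖x‖_A = 1}` (version for `A > 0`). -/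
def mA (A T : H →L[ℂ] H) : ℝ :=
  sInf {r : ℝ | ∃ x : H, vnormA A x = 1 ∧ r = vnormA A (T x)}

/-- `S` is an `A`-adjoint of `T`, i.e. `A S = T* A`. -/
def IsAAdjoint (A T S : H →L[ℂ] H) : Prop :=
  A.comp S = (ContinuousLinearMap.adjoint T).comp A

/-- `A` is strictly positive: positive and `⟨Ax,x⟩ > 0` for all `x ≠ 0`. -/
def StrictPos (A : H →L[ℂ] H) : Prop :=
  A.IsPositive ∧ ∀ x : H, x ≠ 0 → 0 < (innA A x x).re

/-- The inner ℂ product on `H ⊕ H`. -/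
def inn2 (u v : H × H) : ℂ := inner ℂ u.1 v.1 + inner ℂ u.2 v.2

/-- `B = diag(A, A)` acting on `H ⊕ H`. -/
def Bop (A : H →L[ℂ] H) : H × H →L[ℂ] H × H := A.prodMap A

/-- The `B`-seminorm on `H ⊕ H`. -/
def vnormB (A : H →L[ℂ] H) (u : H × H) : ℝ := Real.sqrt (inn2 (Bop A u) u).re

/-- The `B`-numerical radius on `H ⊕ H`, where `B = diag(A, A)`. -/
def wB (A : H →L[ℂ] H) (S : H × H →L[ℂ] H × H) : ℝ :=
  sSup {r : ℝ | ∃ u : H × H, vnormB A u = 1 ∧ r = ‖inn2 (Bop A (S u)) u‖}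

/-- The `2 × 2` operator matrix `[[X, Y], [Z, W]]` acting on `H ⊕ H`. -/
def blk (X Y Z W : H →L[ℂ] H) : H × H →L[ℂ] H × H :=
  ((X.comp (ContinuousLinearMap.fst ℂ H H)) + (Y.comp (ContinuousLinearMap.snd ℂ H H))).prod
    ((Z.comp (ContinuousLinearMap.fst ℂ H H)) + (W.comp (ContinuousLinearMap.snd ℂ H H)))

/- ===== auxiliary lemmas ===== -/
set_option linter.unusedSectionVars false

lemma sq_inner' (A : H →L[ℂ] H) (hA : A.IsPositive) :
    ∃ W : H →L[ℂ] H, ∀ x y : H, (inner ℂ (A x) y : ℂ) = inner ℂ (W x) (W y) := by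
  refine ⟨CFC.sqrt A, fun x y => ?_⟩
  have h0 : (0:H →L[ℂ] H) ≤ A := (ContinuousLinearMap.nonneg_iff_isPositive _).mpr hA
  have hW : CFC.sqrt A * CFC.sqrt A = A := CFC.sqrt_mul_sqrt_self A h0
  have hWsa : IsSelfAdjoint (CFC.sqrt A) :=
    ((ContinuousLinearMap.nonneg_iff_isPositive _).mp (CFC.sqrt_nonneg (a := A))).isSelfAdjoint
  have hadj : ContinuousLinearMap.adjoint (CFC.sqrt A) = CFC.sqrt A :=
    ContinuousLinearMap.isSelfAdjoint_iff'.mp hWsa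
  conv_lhs => rw [← hW]
  rw [ContinuousLinearMap.mul_apply, ← ContinuousLinearMap.adjoint_inner_left, hadj]

lemma norm_sq_inner' (R : H →L[ℂ] H) (u : H) :
    ((inner ℂ (R u) (R u) : ℂ)).re = ‖R u‖ ^ 2 := by
  rw [← RCLike.re_to_complex, inner_self_eq_norm_sq]

lemma inner_re_le' (u v : H) : ((inner ℂ u v : ℂ)).re ≤ ‖u‖ * ‖v‖ :=
  le_trans (Complex.re_le_norm _) (by exact norm_inner_le_norm u v)

lemma pow_Aadj' (A P : H →L[ℂ] H)
    (h1 : A * P = (ContinuousLinearMap.adjoint P) * A) (n : ℕ) :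
    A * (P ^ n) = (ContinuousLinearMap.adjoint (P ^ n)) * A := by
  rw [← ContinuousLinearMap.star_eq_adjoint] at h1 ⊢
  rw [star_pow]
  induction n with
  | zero => simp
  | succ n ih =>
    rw [pow_succ, ← mul_assoc, ih, mul_assoc, h1, ← mul_assoc, ← pow_succ]

lemma Abound' (A P R : H →L[ℂ] H)
    (hRR : ∀ x y : H, (inner ℂ (A x) y : ℂ) = inner ℂ (R x) (R y))
    (h1 : A * P = (ContinuousLinearMap.adjoint P) * A)
    (x : H) (hx : ‖R x‖ = 1) : ‖R (P x)‖ ≤ ‖P‖ := by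
  have step : ∀ m : ℕ, ‖R ((P ^ m) x)‖ ^ 2 ≤ ‖R ((P ^ (m + m)) x)‖ := by
    intro m
    have hadj := pow_Aadj' A P h1 m
    have h2 : ∀ z, ContinuousLinearMap.adjoint (P ^ m) (A z) = A ((P ^ m) z) := by
      intro z
      have := congrFun (congrArg DFunLike.coe hadj.symm) z
      simpa [ContinuousLinearMap.mul_apply] using this
    have e1 : (inner ℂ (A ((P ^ m) x)) ((P ^ m) x) : ℂ) = inner ℂ (A ((P ^ (m+m)) x)) x := by
      calc (inner ℂ (A ((P ^ m) x)) ((P ^ m) x) : ℂ)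
          = inner ℂ (ContinuousLinearMap.adjoint (P ^ m) (A ((P ^ m) x))) x := by
            rw [ContinuousLinearMap.adjoint_inner_left]
        _ = inner ℂ (A ((P ^ m) ((P ^ m) x))) x := by rw [h2]
        _ = inner ℂ (A ((P ^ (m+m)) x)) x := by
            rw [← ContinuousLinearMap.mul_apply (P ^ m) (P ^ m) x, ← pow_add]
    have e2 : ‖R ((P ^ m) x)‖ ^ 2 = ((inner ℂ (A ((P ^ m) x)) ((P ^ m) x) : ℂ)).re := by
      rw [hRR, norm_sq_inner']
    rw [e2, e1, hRR]
    calc (inner ℂ (R ((P ^ (m+m)) x)) (R x) : ℂ).re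
        ≤ ‖R ((P ^ (m+m)) x)‖ * ‖R x‖ := inner_re_le' _ _
      _ = ‖R ((P ^ (m+m)) x)‖ := by rw [hx, mul_one]
  have iter : ∀ n : ℕ, ‖R (P x)‖ ^ (2 ^ n) ≤ ‖R ((P ^ (2 ^ n)) x)‖ := by
    intro n
    induction n with
    | zero => simp
    | succ n ih =>
      have h2 : ‖R (P x)‖ ^ (2 ^ (n+1)) = (‖R (P x)‖ ^ (2 ^ n)) ^ 2 := by
        rw [← pow_mul, pow_succ]
      rw [h2]
      calc (‖R (P x)‖ ^ (2 ^ n)) ^ 2 ≤ ‖R ((P ^ (2 ^ n)) x)‖ ^ 2 := by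
            apply pow_le_pow_left₀ (by positivity) ih
        _ ≤ ‖R ((P ^ (2 ^ n + 2 ^ n)) x)‖ := step _
        _ = ‖R ((P ^ (2 ^ (n+1))) x)‖ := by ring_nf
  have bnd : ∀ n : ℕ, ‖R (P x)‖ ^ (2 ^ n) ≤ ‖P‖ ^ (2 ^ n) * (‖R‖ * ‖x‖) := by
    intro n
    calc ‖R (P x)‖ ^ (2 ^ n) ≤ ‖R ((P ^ (2 ^ n)) x)‖ := iter n
      _ ≤ ‖R‖ * ‖(P ^ (2 ^ n)) x‖ := R.le_opNorm _
      _ ≤ ‖R‖ * (‖P ^ (2 ^ n)‖ * ‖x‖) := by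
          exact mul_le_mul_of_nonneg_left ((P ^ (2 ^ n)).le_opNorm x) (norm_nonneg R)
      _ ≤ ‖R‖ * (‖P‖ ^ (2 ^ n) * ‖x‖) := by
          have := norm_pow_le' P (n := 2 ^ n) (by positivity)
          exact mul_le_mul_of_nonneg_left
            (mul_le_mul_of_nonneg_right this (norm_nonneg x)) (norm_nonneg R)
      _ = ‖P‖ ^ (2 ^ n) * (‖R‖ * ‖x‖) := by ring
  set t := ‖R (P x)‖ with ht
  by_contra hcon
  push_neg at hcon
  rcases lt_or_eq_of_le (norm_nonneg P) with hP | hP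
  · have hq : 1 < t / ‖P‖ := (one_lt_div hP).mpr hcon
    have hqn : ∀ n : ℕ, (t / ‖P‖) ^ (2 ^ n) ≤ ‖R‖ * ‖x‖ := by
      intro n
      rw [div_pow, div_le_iff₀ (by positivity)]
      calc t ^ 2 ^ n ≤ ‖P‖ ^ (2^n) * (‖R‖ * ‖x‖) := bnd n
        _ = ‖R‖ * ‖x‖ * ‖P‖ ^ 2 ^ n := by ring
    obtain ⟨n, hn⟩ := pow_unbounded_of_one_lt (y := t / ‖P‖) (‖R‖ * ‖x‖) hq
    have h2n : (t / ‖P‖) ^ n ≤ (t / ‖P‖) ^ (2 ^ n) :=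
      pow_le_pow_right₀ hq.le (Nat.lt_two_pow_self (n := n)).le
    exact absurd ((hqn n)) (not_le.mpr (lt_of_lt_of_le hn h2n))
  · have h2 := bnd 1
    rw [← hP] at h2
    have : t ^ 2 ≤ 0 := by
      have : t ^ (2^1 : ℕ) ≤ 0 ^ (2^1 : ℕ) * (‖R‖ * ‖x‖) := h2
      simpa using this
    have ht0 : t = 0 := by nlinarith [norm_nonneg (R (P x)), ht]
    rw [ht0] at hcon; exact absurd hcon (not_lt.mpr (le_of_eq hP))

lemma vnormA_eq' (A R : H →L[ℂ] H)
    (hRR : ∀ x y : H, (inner ℂ (A x) y : ℂ) = inner ℂ (R x) (R y)) (x : H) :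
    vnormA A x = ‖R x‖ := by
  rw [vnormA, innA, hRR, norm_sq_inner', Real.sqrt_sq (norm_nonneg _)]

lemma opNormA_nonneg' (A T : H →L[ℂ] H) : 0 ≤ opNormA A T := by
  apply Real.sSup_nonneg
  rintro r ⟨x, -, -, rfl⟩
  exact Real.sqrt_nonneg _

lemma opNormA_bddAbove' (A P R : H →L[ℂ] H)
    (hRR : ∀ x y : H, (inner ℂ (A x) y : ℂ) = inner ℂ (R x) (R y))
    (h1 : A * P = (ContinuousLinearMap.adjoint P) * A) :
    BddAbove {r : ℝ | ∃ x : H,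
      x ∈ closure (Set.range A) ∧ vnormA A x = 1 ∧ r = vnormA A (P x)} := by
  refine ⟨‖P‖, ?_⟩
  rintro r ⟨x, -, hx1, rfl⟩
  rw [vnormA_eq' A R hRR] at hx1 ⊢
  exact Abound' A P R hRR h1 x hx1

/-- The key lemma: `⟨APx,x⟩_A ≤ ‖P‖_A ⟨Ax,x⟩_A` for `A`-selfadjoint `A`-positive `P`. -/
lemma keylem (A P R : H →L[ℂ] H) (hA : A.IsPositive)
    (hRR : ∀ x y : H, (inner ℂ (A x) y : ℂ) = inner ℂ (R x) (R y))
    (h1 : A * P = (ContinuousLinearMap.adjoint P) * A)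
    (h2 : ∀ x : H, 0 ≤ ((inner ℂ (A (P x)) x : ℂ)).re)
    (x : H) :
    ((inner ℂ (A (P x)) x : ℂ)).re ≤ opNormA A P * ((inner ℂ (A x) x : ℂ)).re := by
  have hAsa : ContinuousLinearMap.adjoint A = A :=
    ContinuousLinearMap.isSelfAdjoint_iff'.mp hA.isSelfAdjoint
  have hAPsa : ContinuousLinearMap.adjoint (A * P) = A * P := by
    rw [ContinuousLinearMap.mul_def, ContinuousLinearMap.adjoint_comp, hAsa,
      ← ContinuousLinearMap.mul_def, ← h1]
    exact ContinuousLinearMap.mul_def A P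
  have hAP : (A * P).IsPositive := by
    refine ContinuousLinearMap.isPositive_def'.mpr ⟨ContinuousLinearMap.isSelfAdjoint_iff'.mpr hAPsa, fun z => ?_⟩
    have := h2 z
    simpa [ContinuousLinearMap.reApplyInnerSelf, ContinuousLinearMap.mul_apply] using this
  obtain ⟨W, hW⟩ := sq_inner' (A * P) hAP
  set K : Submodule ℂ H := (LinearMap.range (A : H →ₗ[ℂ] H)).topologicalClosure with hK
  have hKco : (K : Set H) = closure (Set.range A) := by
    rw [hK, Submodule.topologicalClosure_coe]
    congr 1
  haveI : CompleteSpace K := (Submodule.isClosed_topologicalClosure _).completeSpace_coe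
  set r : H := (K.orthogonalProjectionOnto x : H) with hr
  set k : H := x - r with hkdef
  have hkmem : k ∈ Kᗮ := K.sub_starProjection_mem_orthogonal x
  have hrmem : r ∈ K := SetLike.coe_mem _
  have hAk : A k = 0 := by
    have : (inner ℂ (A k) (A k) : ℂ) = 0 := by
      rw [← hAsa, ContinuousLinearMap.adjoint_inner_left, hAsa]
      refine Submodule.inner_left_of_mem_orthogonal ?_ hkmem
      exact Submodule.le_topologicalClosure _ (LinearMap.mem_range_self _ (A k))
    exact inner_self_eq_zero.mp this
  have hRk : R k = 0 := by
    have : (inner ℂ (R k) (R k) : ℂ) = 0 := by rw [← hRR, hAk, inner_zero_left]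
    exact inner_self_eq_zero.mp this
  have hWk : W k = 0 := by
    have : (inner ℂ (W k) (W k) : ℂ) = 0 := by
      rw [← hW, ContinuousLinearMap.mul_apply, ← hAsa,
        ContinuousLinearMap.adjoint_inner_left, hAk, inner_zero_right]
    exact inner_self_eq_zero.mp this
  have hxrk : x = r + k := by rw [hkdef]; abel
  have hWx : W x = W r := by rw [hxrk, map_add, hWk, add_zero]
  have hRx : R x = R r := by rw [hxrk, map_add, hRk, add_zero]
  have lhs_eq : ((inner ℂ (A (P x)) x : ℂ)).re = ((inner ℂ (A (P r)) r : ℂ)).re := by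
    have e1 : (inner ℂ (A (P x)) x : ℂ) = inner ℂ (W x) (W x) := by
      rw [← hW, ContinuousLinearMap.mul_apply]
    have e2 : (inner ℂ (A (P r)) r : ℂ) = inner ℂ (W r) (W r) := by
      rw [← hW, ContinuousLinearMap.mul_apply]
    rw [e1, e2, hWx]
  have rhs_eq : ((inner ℂ (A x) x : ℂ)).re = ‖R r‖ ^ 2 := by
    rw [hRR, hRx, norm_sq_inner']
  rw [lhs_eq, rhs_eq]
  rcases eq_or_lt_of_le (norm_nonneg (R r)) with hz | hz
  · have : (inner ℂ (A (P r)) r : ℂ) = 0 := by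
      rw [hRR, (norm_eq_zero.mp hz.symm), inner_zero_right]
    rw [this]
    simp [← hz]
  · set c : ℂ := (↑(‖R r‖⁻¹) : ℂ) with hc
    set z : H := c • r with hzdef
    have hzK : z ∈ K := K.smul_mem c hrmem
    have hRz : ‖R z‖ = 1 := by
      rw [hzdef, map_smul, norm_smul, hc]
      simp [norm_inv, _root_.abs_of_nonneg (le_of_lt hz), Complex.norm_real]
      field_simp
    have hmem : vnormA A (P z) ∈
        {s : ℝ | ∃ y : H, y ∈ closure (Set.range A) ∧ vnormA A y = 1 ∧ s = vnormA A (P y)} := by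
      refine ⟨z, ?_, ?_, rfl⟩
      · rw [← hKco]; exact hzK
      · rw [vnormA_eq' A R hRR]; exact hRz
    have hle : vnormA A (P z) ≤ opNormA A P :=
      le_csSup (opNormA_bddAbove' A P R hRR h1) hmem
    rw [vnormA_eq' A R hRR] at hle
    have hRPz : ‖R (P z)‖ = ‖R r‖⁻¹ * ‖R (P r)‖ := by
      rw [hzdef, map_smul, map_smul, norm_smul, hc]
      simp [norm_inv, _root_.abs_of_nonneg (le_of_lt hz), Complex.norm_real]
    have hRPr : ‖R (P r)‖ ≤ opNormA A P * ‖R r‖ := by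
      have h' := mul_le_mul_of_nonneg_right hle (le_of_lt hz)
      have h'' : ‖R r‖⁻¹ * ‖R (P r)‖ * ‖R r‖ = ‖R (P r)‖ := by field_simp
      rw [hRPz, h''] at h'
      exact h'
    calc ((inner ℂ (A (P r)) r : ℂ)).re ≤ ‖R (P r)‖ * ‖R r‖ := by
          rw [hRR]; exact inner_re_le' _ _
      _ ≤ (opNormA A P * ‖R r‖) * ‖R r‖ :=
          mul_le_mul_of_nonneg_right hRPr (norm_nonneg _)
      _ = opNormA A P * ‖R r‖ ^ 2 := by ring

/-- "swap" lemma: from `A S' = S† A` and `S'† A = A S` derive `A (S S') = (S S')† A`. -/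
lemma comb (A S S' : H →L[ℂ] H)
    (h : A * S' = (ContinuousLinearMap.adjoint S) * A)
    (h' : (ContinuousLinearMap.adjoint S') * A = A * S) :
    A * (S * S') = (ContinuousLinearMap.adjoint (S * S')) * A := by
  have hst : ContinuousLinearMap.adjoint (S * S')
      = ContinuousLinearMap.adjoint S' * ContinuousLinearMap.adjoint S := by
    rw [← ContinuousLinearMap.star_eq_adjoint, ← ContinuousLinearMap.star_eq_adjoint,
      ← ContinuousLinearMap.star_eq_adjoint, star_mul]
  rw [hst, ← mul_assoc, ← h', mul_assoc, h, ← mul_assoc]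

lemma arith_step (a b a' b' p q t M₁ M₂ : ℝ)
    (ht0 : 0 ≤ t) (hp : 0 ≤ p) (hq : 0 ≤ q)
    (ha : 0 ≤ a) (hb : 0 ≤ b) (ha' : 0 ≤ a') (hb' : 0 ≤ b')
    (hpq : p^2 + q^2 = 1)
    (ht1 : t ≤ a*p + b*q) (ht2 : t ≤ q*b' + p*a')
    (hk1 : b'^2 + b^2 ≤ M₁ * p^2) (hk2 : a^2 + a'^2 ≤ M₂ * q^2)
    (hMl : M₁ ≤ max M₁ M₂) (hMr : M₂ ≤ max M₁ M₂) :
    t^2 ≤ 1/2 * max M₁ M₂ := by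
  have s1 : t * t ≤ (a*p + b*q) * (q*b' + p*a') :=
    mul_le_mul ht1 ht2 ht0 (by positivity)
  have s2 : 2 * ((a*p + b*q) * (q*b' + p*a')) ≤ (a*p + b*q)^2 + (q*b' + p*a')^2 := by
    nlinarith [sq_nonneg ((a*p + b*q) - (q*b' + p*a'))]
  have s3 : (a*p + b*q)^2 ≤ a^2 + b^2 := by
    nlinarith [sq_nonneg (a*q - b*p)]
  have s4 : (q*b' + p*a')^2 ≤ b'^2 + a'^2 := by
    nlinarith [sq_nonneg (q*a' - p*b')]
  have s5 : M₁ * p^2 + M₂ * q^2 ≤ max M₁ M₂ := by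
    nlinarith [mul_nonneg (sub_nonneg.mpr hMl) (sq_nonneg p),
      mul_nonneg (sub_nonneg.mpr hMr) (sq_nonneg q)]
  nlinarith [s1, s2, s3, s4, s5]


theorem stmt9 (A X Y X' Y' : H →L[ℂ] H) (hA : A.IsPositive)
    (hX : IsAAdjoint A X X') (hY : IsAAdjoint A Y Y') :
    (wB A (blk 0 X Y 0))^2 ≤
      (1/2) * max (opNormA A (X * X' + Y' * Y)) (opNormA A (X' * X + Y * Y')) := by
  obtain ⟨R, hRR⟩ := sq_inner' A hA
  have hAsa : ContinuousLinearMap.adjoint A = A :=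
    ContinuousLinearMap.isSelfAdjoint_iff'.mp hA.isSelfAdjoint
  have hXm : A * X' = (ContinuousLinearMap.adjoint X) * A := hX
  have hYm : A * Y' = (ContinuousLinearMap.adjoint Y) * A := hY
  have hX2 : (ContinuousLinearMap.adjoint X') * A = A * X := by
    have h := congrArg star hXm
    simp only [star_mul, ContinuousLinearMap.star_eq_adjoint, hAsa,
      ContinuousLinearMap.adjoint_adjoint] at h
    exact h
  have hY2 : (ContinuousLinearMap.adjoint Y') * A = A * Y := by
    have h := congrArg star hYm
    simp only [star_mul, ContinuousLinearMap.star_eq_adjoint, hAsa,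
      ContinuousLinearMap.adjoint_adjoint] at h
    exact h
  set P₁ := X * X' + Y' * Y with hP₁
  set P₂ := X' * X + Y * Y' with hP₂
  set M₁ := opNormA A P₁ with hM₁
  set M₂ := opNormA A P₂ with hM₂
  -- A-self-adjointness of P₁ and P₂
  have h1 : A * P₁ = (ContinuousLinearMap.adjoint P₁) * A := by
    rw [hP₁, mul_add, map_add, add_mul, comb A X X' hXm hX2, comb A Y' Y hY2.symm hYm.symm]
  have h1' : A * P₂ = (ContinuousLinearMap.adjoint P₂) * A := by
    rw [hP₂, mul_add, map_add, add_mul, comb A X' X hX2.symm hXm.symm, comb A Y Y' hYm hY2]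
  -- pointwise values
  have hXpt : ∀ w : H, A (X w) = ContinuousLinearMap.adjoint X' (A w) := by
    intro w
    have := congrFun (congrArg DFunLike.coe hX2) w
    simpa [ContinuousLinearMap.mul_apply] using this.symm
  have hYpt : ∀ w : H, A (Y w) = ContinuousLinearMap.adjoint Y' (A w) := by
    intro w
    have := congrFun (congrArg DFunLike.coe hY2) w
    simpa [ContinuousLinearMap.mul_apply] using this.symm
  have hX'pt : ∀ w : H, A (X' w) = ContinuousLinearMap.adjoint X (A w) := by
    intro w
    have := congrFun (congrArg DFunLike.coe hXm) w
    simpa [ContinuousLinearMap.mul_apply] using this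
  have hY'pt : ∀ w : H, A (Y' w) = ContinuousLinearMap.adjoint Y (A w) := by
    intro w
    have := congrFun (congrArg DFunLike.coe hYm) w
    simpa [ContinuousLinearMap.mul_apply] using this
  have keyid1 : ∀ v : H, ((inner ℂ (A (P₁ v)) v : ℂ)).re = ‖R (X' v)‖^2 + ‖R (Y v)‖^2 := by
    intro v
    have e : (inner ℂ (A (P₁ v)) v : ℂ)
        = inner ℂ (A (X' v)) (X' v) + inner ℂ (A (Y v)) (Y v) := by
      rw [hP₁]
      rw [ContinuousLinearMap.add_apply, ContinuousLinearMap.mul_apply,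
        ContinuousLinearMap.mul_apply, map_add, inner_add_left]
      congr 1
      · rw [hXpt, ContinuousLinearMap.adjoint_inner_left]
      · rw [hY'pt, ContinuousLinearMap.adjoint_inner_left]
    rw [e, Complex.add_re, hRR, hRR, norm_sq_inner', norm_sq_inner']
  have keyid2 : ∀ v : H, ((inner ℂ (A (P₂ v)) v : ℂ)).re = ‖R (X v)‖^2 + ‖R (Y' v)‖^2 := by
    intro v
    have e : (inner ℂ (A (P₂ v)) v : ℂ)
        = inner ℂ (A (X v)) (X v) + inner ℂ (A (Y' v)) (Y' v) := by
      rw [hP₂]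
      rw [ContinuousLinearMap.add_apply, ContinuousLinearMap.mul_apply,
        ContinuousLinearMap.mul_apply, map_add, inner_add_left]
      congr 1
      · rw [hX'pt, ContinuousLinearMap.adjoint_inner_left]
      · rw [hYpt, ContinuousLinearMap.adjoint_inner_left]
    rw [e, Complex.add_re, hRR, hRR, norm_sq_inner', norm_sq_inner']
  have keyineq1 : ∀ v : H, ‖R (X' v)‖^2 + ‖R (Y v)‖^2 ≤ M₁ * ‖R v‖^2 := by
    intro v
    have := keylem A P₁ R hA hRR h1
      (fun w => by rw [keyid1 w]; positivity) v
    rw [keyid1 v, hRR, norm_sq_inner'] at this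
    exact this
  have keyineq2 : ∀ v : H, ‖R (X v)‖^2 + ‖R (Y' v)‖^2 ≤ M₂ * ‖R v‖^2 := by
    intro v
    have := keylem A P₂ R hA hRR h1'
      (fun w => by rw [keyid2 w]; positivity) v
    rw [keyid2 v, hRR, norm_sq_inner'] at this
    exact this
  have hM1 : 0 ≤ M₁ := opNormA_nonneg' A P₁
  have hMx : 0 ≤ max M₁ M₂ := le_trans hM1 (le_max_left _ _)
  set cc : ℝ := (1/2) * max M₁ M₂ with hcc
  have hccn : 0 ≤ cc := by positivity
  -- each element of the wB set is ≤ √cc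
  have hub : ∀ t ∈ {r : ℝ | ∃ u : H × H,
      vnormB A u = 1 ∧ r = ‖inn2 (Bop A ((blk 0 X Y 0) u)) u‖},
      t ≤ Real.sqrt cc := by
    rintro t ⟨u, hu1, rfl⟩
    obtain ⟨x, y⟩ := u
    -- the unit condition
    have hpq : ‖R x‖^2 + ‖R y‖^2 = 1 := by
      have h' : (inn2 (Bop A (x, y)) (x, y)).re = 1 := by
        have := hu1
        rw [vnormB] at this
        exact Real.sqrt_eq_one.mp this
      have e : inn2 (Bop A (x, y)) (x, y)
          = inner ℂ (A x) x + inner ℂ (A y) y := rfl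
      rw [e, Complex.add_re, hRR, hRR, norm_sq_inner', norm_sq_inner'] at h'
      exact h'
    -- value of the block operator
    have hTu : (blk (0 : H →L[ℂ] H) X Y 0) (x, y) = (X y, Y x) := by
      simp [blk, ContinuousLinearMap.prod_apply, ContinuousLinearMap.add_apply,
        ContinuousLinearMap.comp_apply]
    have hz1 : inn2 (Bop A ((blk (0 : H →L[ℂ] H) X Y 0) (x, y))) (x, y)
        = inner ℂ (R (X y)) (R x) + inner ℂ (R (Y x)) (R y) := by
      rw [hTu]
      have e : inn2 (Bop A (X y, Y x)) (x, y)
          = inner ℂ (A (X y)) x + inner ℂ (A (Y x)) y := rfl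
      rw [e, hRR, hRR]
    have hz2 : inn2 (Bop A ((blk (0 : H →L[ℂ] H) X Y 0) (x, y))) (x, y)
        = inner ℂ (R y) (R (X' x)) + inner ℂ (R x) (R (Y' y)) := by
      rw [hTu]
      have e : inn2 (Bop A (X y, Y x)) (x, y)
          = inner ℂ (A (X y)) x + inner ℂ (A (Y x)) y := rfl
      rw [e]
      congr 1
      · rw [hXpt, ContinuousLinearMap.adjoint_inner_left, hRR]
      · rw [hYpt, ContinuousLinearMap.adjoint_inner_left, hRR]
    set a := ‖R (X y)‖; set b := ‖R (Y x)‖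
    set a' := ‖R (Y' y)‖; set b' := ‖R (X' x)‖
    set p := ‖R x‖; set q := ‖R y‖
    set t := ‖inn2 (Bop A ((blk (0 : H →L[ℂ] H) X Y 0) (x, y))) (x, y)‖ with htdef
    have ht0 : 0 ≤ t := norm_nonneg _
    have ht1 : t ≤ a * p + b * q := by
      rw [htdef, hz1]
      calc ‖inner ℂ (R (X y)) (R x) + inner ℂ (R (Y x)) (R y)‖
          ≤ ‖(inner ℂ (R (X y)) (R x) : ℂ)‖
            + ‖(inner ℂ (R (Y x)) (R y) : ℂ)‖ := norm_add_le _ _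
        _ ≤ a * p + b * q := by
            gcongr
            · exact norm_inner_le_norm _ _
            · exact norm_inner_le_norm _ _
    have ht2 : t ≤ q * b' + p * a' := by
      rw [htdef, hz2]
      calc ‖inner ℂ (R y) (R (X' x)) + inner ℂ (R x) (R (Y' y))‖
          ≤ ‖(inner ℂ (R y) (R (X' x)) : ℂ)‖
            + ‖(inner ℂ (R x) (R (Y' y)) : ℂ)‖ := norm_add_le _ _
        _ ≤ q * b' + p * a' := by
            gcongr
            · exact norm_inner_le_norm _ _
            · exact norm_inner_le_norm _ _
    have hk1 : b'^2 + b^2 ≤ M₁ * p^2 := keyineq1 x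
    have hk2 : a^2 + a'^2 ≤ M₂ * q^2 := keyineq2 y
    have hsq : t^2 ≤ cc := by
      rw [hcc]
      exact arith_step a b a' b' p q t M₁ M₂ ht0 (norm_nonneg _) (norm_nonneg _)
        (norm_nonneg _) (norm_nonneg _) (norm_nonneg _) (norm_nonneg _)
        hpq ht1 ht2 hk1 hk2 (le_max_left _ _) (le_max_right _ _)
    exact (Real.le_sqrt ht0 hccn).mpr hsq
  have hwb_le : wB A (blk 0 X Y 0) ≤ Real.sqrt cc :=
    Real.sSup_le hub (Real.sqrt_nonneg _)
  have hwb0 : 0 ≤ wB A (blk 0 X Y 0) := by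
    apply Real.sSup_nonneg
    rintro r ⟨u, -, rfl⟩
    exact norm_nonneg _
  calc (wB A (blk 0 X Y 0))^2 ≤ (Real.sqrt cc)^2 := by
        apply pow_le_pow_left₀ hwb0 hwb_le
    _ = cc := Real.sq_sqrt hccn
end
end

section
/- Let A be a strictly positive operator on H and T ∈ B_A(H). Then (1/4)‖TT^{♯A} + T^{♯A}T‖_A ≤ w_A(T)² ≤ (1/2)‖TT^{♯A} + T^{♯A}T‖_A. -/
set_option linter.unusedSectionVars false


noncomputable section
open Complex ContinuousLinearMap

variable {H : Type*} [NormedAddCommGroup H] [InnerProductSpace ℂ H] [CompleteSpace H]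

namespace Aux

variable (A : H →L[ℂ] H)

lemma innA_add_left (x x' y : H) : innA A (x + x') y = innA A x y + innA A x' y := by
  simp [innA, inner_add_left]

lemma innA_add_right (x y y' : H) : innA A x (y + y') = innA A x y + innA A x y' := by
  simp [innA, inner_add_right]

lemma innA_sub_left (x x' y : H) : innA A (x - x') y = innA A x y - innA A x' y := by
  simp [innA, inner_sub_left]

lemma innA_sub_right (x y y' : H) : innA A x (y - y') = innA A x y - innA A x y' := by
  simp [innA, inner_sub_right]

lemma innA_smul_left (c : ℂ) (x y : H) :
    innA A (c • x) y = (starRingEnd ℂ) c * innA A x y := by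
  simp [innA, inner_smul_left, mul_comm]

lemma innA_smul_right (c : ℂ) (x y : H) : innA A x (c • y) = c * innA A x y := by
  simp [innA, inner_smul_right]

variable {A}

lemma innA_conj_symm (hA : StrictPos A) (x y : H) :
    innA A y x = (starRingEnd ℂ) (innA A x y) := by
  have hsa : ContinuousLinearMap.adjoint A = A :=
    (ContinuousLinearMap.isSelfAdjoint_iff'.mp hA.1.isSelfAdjoint)
  have h1 : innA A y x = inner ℂ y (A x) := by
    rw [innA]
    conv_lhs => rw [← hsa]
    exact ContinuousLinearMap.adjoint_inner_left A x y
  rw [h1]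
  exact (inner_conj_symm y (A x)).symm

lemma innA_self_re_nonneg (hA : StrictPos A) (x : H) : 0 ≤ (innA A x x).re := by
  rcases eq_or_ne x 0 with h | h
  · simp [innA, h]
  · exact (hA.2 x h).le

lemma innA_self_im (hA : StrictPos A) (x : H) : (innA A x x).im = 0 := by
  have := innA_conj_symm hA x x
  have h2 : (innA A x x).im = -(innA A x x).im := by
    conv_lhs => rw [this]
    simp
  linarith

lemma vnormA_nonneg (x : H) : 0 ≤ vnormA A x := Real.sqrt_nonneg _

lemma vnormA_sq (hA : StrictPos A) (x : H) : vnormA A x ^ 2 = (innA A x x).re :=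
  Real.sq_sqrt (innA_self_re_nonneg hA x)

lemma innA_self_eq (hA : StrictPos A) (x : H) :
    innA A x x = ((vnormA A x ^ 2 : ℝ) : ℂ) := by
  apply Complex.ext <;> simp [vnormA_sq hA, innA_self_im hA]

lemma vnormA_pos (hA : StrictPos A) {x : H} (hx : x ≠ 0) : 0 < vnormA A x :=
  Real.sqrt_pos.mpr (hA.2 x hx)

lemma vnormA_zero : vnormA A (0 : H) = 0 := by simp [vnormA, innA]

/-- Cauchy–Schwarz for the A-inner product. -/
lemma innA_abs_le (hA : StrictPos A) (x y : H) :
    ‖innA A x y‖ ≤ vnormA A x * vnormA A y := by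
  rcases eq_or_ne y 0 with hy | hy
  · simp [hy, innA, vnormA_zero]
  · set b : ℝ := vnormA A y ^ 2 with hb
    have hbpos : 0 < b := pow_pos (vnormA_pos hA hy) 2
    set pxy := innA A x y with hpxy
    have hyx : innA A y x = (starRingEnd ℂ) pxy := innA_conj_symm hA x y
    have hyy : innA A y y = (b : ℂ) := by rw [innA_self_eq hA y]
    set w : H := (b : ℂ) • x - ((starRingEnd ℂ) pxy) • y with hw
    have expand : innA A w w =
        (b : ℂ) ^ 2 * innA A x x - (b : ℂ) * (Complex.normSq pxy : ℂ) := by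
      simp only [hw, innA_sub_left, innA_sub_right, innA_smul_left, innA_smul_right,
        hyx, hyy, ← hpxy, Complex.conj_ofReal, RingHomCompTriple.comp_apply,
        Complex.conj_conj]
      simp only [RingHom.id_apply]
      rw [← Complex.mul_conj pxy]
      ring
    have hpos := innA_self_re_nonneg hA w
    rw [expand] at hpos
    have hre : ((b : ℂ) ^ 2 * innA A x x - (b : ℂ) * (Complex.normSq pxy : ℂ)).re
        = b ^ 2 * (innA A x x).re - b * Complex.normSq pxy := by
      simp [Complex.mul_re, pow_two]
    rw [hre] at hpos
    have h2 : Complex.normSq pxy ≤ (innA A x x).re * b := by nlinarith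
    have habs : ‖pxy‖ = Real.sqrt (Complex.normSq pxy) := by rw [Complex.norm_def]
    have hprod : vnormA A x * vnormA A y = Real.sqrt ((innA A x x).re * b) := by
      rw [Real.sqrt_mul (innA_self_re_nonneg hA x), hb, Real.sqrt_sq (vnormA_nonneg y)]
      rfl
    rw [habs, hprod]
    exact Real.sqrt_le_sqrt h2

/-- triangle inequality -/
lemma vnormA_add_le (hA : StrictPos A) (u v : H) :
    vnormA A (u + v) ≤ vnormA A u + vnormA A v := by
  have h1 : (innA A (u+v) (u+v)).re
      = (innA A u u).re + 2 * (innA A u v).re + (innA A v v).re := by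
    rw [innA_add_left, innA_add_right, innA_add_right, innA_conj_symm hA u v]
    simp
    ring
  have h2 : (innA A u v).re ≤ vnormA A u * vnormA A v := by
    calc (innA A u v).re ≤ ‖innA A u v‖ := Complex.re_le_norm _
    _ ≤ _ := innA_abs_le hA u v
  have h3 : (innA A (u+v) (u+v)).re ≤ (vnormA A u + vnormA A v) ^ 2 := by
    rw [h1, ← vnormA_sq hA u, ← vnormA_sq hA v]; nlinarith
  calc vnormA A (u + v) = Real.sqrt (innA A (u+v) (u+v)).re := rfl
  _ ≤ Real.sqrt ((vnormA A u + vnormA A v) ^ 2) := Real.sqrt_le_sqrt h3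
  _ = vnormA A u + vnormA A v :=
      Real.sqrt_sq (add_nonneg (vnormA_nonneg u) (vnormA_nonneg v))

lemma vnormA_smul (hA : StrictPos A) (c : ℂ) (x : H) :
    vnormA A (c • x) = ‖c‖ * vnormA A x := by
  have h1 : (innA A (c • x) (c • x)).re = Complex.normSq c * (innA A x x).re := by
    rw [innA_smul_left, innA_smul_right, ← mul_assoc, ← Complex.normSq_eq_conj_mul_self]
    simp [Complex.mul_re]
  rw [vnormA, h1, Real.sqrt_mul (Complex.normSq_nonneg c), Complex.norm_def]
  rfl


lemma vnormA_le_norm (hA : StrictPos A) (y : H) :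
    vnormA A y ≤ Real.sqrt ‖A‖ * ‖y‖ := by
  have h1 : (innA A y y).re ≤ ‖A‖ * ‖y‖ ^ 2 := by
    calc (innA A y y).re ≤ ‖innA A y y‖ := Complex.re_le_norm _
    _ = ‖(inner ℂ (A y) y : ℂ)‖ := by rw [innA]
    _ ≤ ‖A y‖ * ‖y‖ := norm_inner_le_norm _ _
    _ ≤ ‖A‖ * ‖y‖ * ‖y‖ := mul_le_mul_of_nonneg_right (A.le_opNorm y) (norm_nonneg y)
    _ = ‖A‖ * ‖y‖ ^ 2 := by ring
  calc vnormA A y ≤ Real.sqrt (‖A‖ * ‖y‖ ^ 2) := Real.sqrt_le_sqrt h1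
  _ = Real.sqrt ‖A‖ * ‖y‖ := by
      rw [Real.sqrt_mul (norm_nonneg A), Real.sqrt_sq (norm_nonneg y)]

section Key
variable {R : H →L[ℂ] H}

lemma pow_move (hR : ∀ x y, innA A (R x) y = innA A x (R y)) :
    ∀ (k : ℕ) (x y : H), innA A ((R ^ k) x) y = innA A x ((R ^ k) y) := by
  intro k
  induction k with
  | zero => intro x y; simp
  | succ m ih =>
    intro x y
    have h1 : (R ^ (m+1)) x = (R ^ m) (R x) := by rw [pow_succ]; rfl
    have h2 : R ((R ^ m) y) = (R ^ (m+1)) y := by rw [pow_succ']; rfl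
    rw [h1, ih, hR, h2]

lemma sq_le_key (hA : StrictPos A) (hR : ∀ x y, innA A (R x) y = innA A x (R y))
    (k : ℕ) (x : H) :
    vnormA A ((R ^ k) x) ^ 2 ≤ vnormA A x * vnormA A ((R ^ (k + k)) x) := by
  have h1 : vnormA A ((R ^ k) x) ^ 2 = (innA A ((R ^ k) x) ((R ^ k) x)).re :=
    vnormA_sq hA _
  have h2 : innA A ((R ^ k) x) ((R ^ k) x) = innA A x ((R ^ (k + k)) x) := by
    rw [pow_move hR]
    congr 1
    rw [pow_add]
    rfl
  rw [h1, h2]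
  exact le_trans (Complex.re_le_norm _) (innA_abs_le hA _ _)

lemma iter_key (hA : StrictPos A) (hR : ∀ x y, innA A (R x) y = innA A x (R y)) :
    ∀ (m : ℕ) (x : H),
      vnormA A (R x) ^ (2 ^ m) * vnormA A x
        ≤ vnormA A x ^ (2 ^ m) * vnormA A ((R ^ (2 ^ m)) x) := by
  intro m
  induction m with
  | zero =>
    intro x
    simp [mul_comm]
  | succ m ih =>
    intro x
    rcases eq_or_ne x 0 with rfl | hx
    · simp [vnormA_zero, map_zero]
    have hnx : 0 < vnormA A x := vnormA_pos hA hx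
    have h1 := ih x
    have h3 := sq_le_key hA hR (2 ^ m) x
    have hexp : (2 : ℕ) ^ m + 2 ^ m = 2 ^ (m + 1) := by
      rw [pow_succ]; omega
    rw [hexp] at h3
    have e1 : vnormA A (R x) ^ (2 ^ (m+1)) = (vnormA A (R x) ^ (2 ^ m)) ^ 2 := by
      rw [pow_succ 2 m, pow_mul]
    have e2 : vnormA A x ^ (2 ^ (m+1)) = (vnormA A x ^ (2 ^ m)) ^ 2 := by
      rw [pow_succ 2 m, pow_mul]
    rw [e1, e2]
    rw [← mul_le_mul_iff_of_pos_right hnx]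
    have h2 : (vnormA A (R x) ^ (2 ^ m) * vnormA A x) * (vnormA A (R x) ^ (2 ^ m) * vnormA A x)
        ≤ (vnormA A x ^ (2 ^ m) * vnormA A ((R ^ (2 ^ m)) x)) * (vnormA A x ^ (2 ^ m) * vnormA A ((R ^ (2 ^ m)) x)) :=
      mul_self_le_mul_self (mul_nonneg (pow_nonneg (vnormA_nonneg _) _) (vnormA_nonneg _)) h1
    have h4 : (vnormA A x ^ (2 ^ m)) ^ 2 * (vnormA A ((R ^ (2 ^ m)) x)) ^ 2
        ≤ (vnormA A x ^ (2 ^ m)) ^ 2 * (vnormA A x * vnormA A ((R ^ (2 ^ (m+1))) x)) :=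
      mul_le_mul_of_nonneg_left h3 (sq_nonneg _)
    nlinarith [h2, h4]

lemma aselfadj_bound (hA : StrictPos A)
    (hR : ∀ x y, innA A (R x) y = innA A x (R y)) (x : H) :
    vnormA A (R x) ≤ ‖R‖ * vnormA A x := by
  rcases eq_or_ne x 0 with rfl | hx
  · simp [vnormA_zero, map_zero]
  rcases eq_or_ne R 0 with rfl | hRne
  · simp [vnormA_zero]
  have hnx : 0 < vnormA A x := vnormA_pos hA hx
  have hRpos : 0 < ‖R‖ := norm_pos_iff.mpr hRne
  by_contra hcon
  push_neg at hcon
  set a := vnormA A (R x) with ha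
  set c := vnormA A x with hc
  set q : ℝ := a / (‖R‖ * c) with hq
  have hq1 : 1 < q := (one_lt_div (by positivity)).mpr hcon
  set K : ℝ := Real.sqrt ‖A‖ * ‖x‖ / c with hK
  have hbound : ∀ m : ℕ, q ^ (2 ^ m) ≤ K := by
    intro m
    have h1 := iter_key hA hR m x
    have h2 : vnormA A ((R ^ (2 ^ m)) x) ≤ Real.sqrt ‖A‖ * (‖R‖ ^ (2 ^ m) * ‖x‖) := by
      calc vnormA A ((R ^ (2 ^ m)) x) ≤ Real.sqrt ‖A‖ * ‖(R ^ (2 ^ m)) x‖ :=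
            vnormA_le_norm hA _
      _ ≤ Real.sqrt ‖A‖ * (‖R ^ (2 ^ m)‖ * ‖x‖) := by
          gcongr
          exact (R ^ (2 ^ m)).le_opNorm x
      _ ≤ Real.sqrt ‖A‖ * (‖R‖ ^ (2 ^ m) * ‖x‖) := by
          gcongr
          exact norm_pow_le' R (pow_pos two_pos m)
    have h3 : a ^ (2 ^ m) * c ≤ c ^ (2 ^ m) * (Real.sqrt ‖A‖ * (‖R‖ ^ (2 ^ m) * ‖x‖)) :=
      le_trans h1 (mul_le_mul_of_nonneg_left h2 (by positivity))
    have hdpos : (0 : ℝ) < (‖R‖ * c) ^ (2 ^ m) := by positivity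
    rw [hq, div_pow, div_le_iff₀ hdpos, hK, mul_pow, div_mul_eq_mul_div, le_div_iff₀ hnx]
    calc a ^ (2 ^ m) * c ≤ c ^ (2 ^ m) * (Real.sqrt ‖A‖ * (‖R‖ ^ (2 ^ m) * ‖x‖)) := h3
    _ = Real.sqrt ‖A‖ * ‖x‖ * (‖R‖ ^ (2 ^ m) * c ^ (2 ^ m)) := by ring
  obtain ⟨m, hm⟩ := pow_unbounded_of_one_lt K hq1
  have hmle : q ^ m ≤ q ^ (2 ^ m) :=
    pow_le_pow_right₀ hq1.le (Nat.le_of_lt (Nat.lt_two_pow_self (n := m)))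
  exact absurd (le_trans hmle (hbound m)) (not_le.mpr hm)

end Key


lemma aselfadj_numrad (hA : StrictPos A) {R : H →L[ℂ] H}
    (hR : ∀ x y, innA A (R x) y = innA A x (R y)) {w : ℝ} (hw0 : 0 ≤ w)
    (hw : ∀ x, vnormA A x = 1 → ‖innA A (R x) x‖ ≤ w) (x : H) :
    vnormA A (R x) ≤ w * vnormA A x := by
  have hz : ∀ z : H, ‖innA A (R z) z‖ ≤ w * vnormA A z ^ 2 := by
    intro z
    rcases eq_or_ne z 0 with rfl | hzne
    · simp [innA, vnormA_zero, map_zero]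
    · have hnz : 0 < vnormA A z := vnormA_pos hA hzne
      set u : H := ((vnormA A z : ℂ))⁻¹ • z with hu
      have hnu : vnormA A u = 1 := by
        rw [hu, vnormA_smul hA, norm_inv, Complex.norm_real, Real.norm_eq_abs, abs_of_pos hnz]
        field_simp
      have hru : innA A (R u) u
          = ((vnormA A z : ℂ))⁻¹ * ((starRingEnd ℂ) ((vnormA A z : ℂ))⁻¹ * innA A (R z) z) := by
        rw [hu, map_smul, innA_smul_left, innA_smul_right]
        ring
      have hb := hw u hnu
      rw [hru, norm_mul, norm_mul, norm_inv, Complex.norm_real, Real.norm_eq_abs, abs_of_pos hnz,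
        Complex.norm_conj, norm_inv, Complex.norm_real, Real.norm_eq_abs, abs_of_pos hnz] at hb
      have h2 := mul_le_mul_of_nonneg_left hb (sq_nonneg (vnormA A z))
      have h3 : vnormA A z ^ 2 *
          ((vnormA A z)⁻¹ * ((vnormA A z)⁻¹ * ‖innA A (R z) z‖))
          = ‖innA A (R z) z‖ := by
        field_simp
      rw [h3] at h2
      linarith
  have hpol : ∀ x y : H,
      (innA A (R x) y).re ≤ w / 2 * (vnormA A x ^ 2 + vnormA A y ^ 2) := by
    intro x y
    have e2 : (innA A (R y) x).re = (innA A (R x) y).re := by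
      rw [hR, innA_conj_symm hA]
      simp
    have e1 : (innA A (R (x + y)) (x + y)).re - (innA A (R (x - y)) (x - y)).re
        = 4 * (innA A (R x) y).re := by
      simp only [map_add, map_sub, innA_add_left, innA_add_right, innA_sub_left,
        innA_sub_right, Complex.sub_re, Complex.add_re]
      linarith
    have b1 : (innA A (R (x + y)) (x + y)).re ≤ w * vnormA A (x + y) ^ 2 :=
      le_trans (Complex.re_le_norm _) (hz _)
    have b2 : -(innA A (R (x - y)) (x - y)).re ≤ w * vnormA A (x - y) ^ 2 :=
      le_trans (le_trans (neg_le_abs _) (Complex.abs_re_le_norm _)) (hz _)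
    have par : vnormA A (x + y) ^ 2 + vnormA A (x - y) ^ 2
        = 2 * vnormA A x ^ 2 + 2 * vnormA A y ^ 2 := by
      rw [vnormA_sq hA, vnormA_sq hA, vnormA_sq hA, vnormA_sq hA]
      simp only [innA_add_left, innA_add_right, innA_sub_left, innA_sub_right,
        Complex.add_re, Complex.sub_re]
      ring
    have par' : w * (vnormA A (x + y) ^ 2 + vnormA A (x - y) ^ 2)
        = w * (2 * vnormA A x ^ 2 + 2 * vnormA A y ^ 2) := by rw [par]
    have expand : w * (vnormA A (x + y) ^ 2 + vnormA A (x - y) ^ 2)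
        = w * vnormA A (x + y) ^ 2 + w * vnormA A (x - y) ^ 2 := by ring
    linarith [par', expand]
  rcases eq_or_ne (R x) 0 with hrx | hrx
  · rw [hrx, vnormA_zero]
    exact mul_nonneg hw0 (vnormA_nonneg x)
  · have hnrx : 0 < vnormA A (R x) := vnormA_pos hA hrx
    rcases eq_or_ne x 0 with rfl | hx
    · simp at hrx
    have hnx : 0 < vnormA A x := vnormA_pos hA hx
    set y : H := ((vnormA A x / vnormA A (R x) : ℝ) : ℂ) • (R x) with hy
    have hkey := hpol x y
    have e3 : (innA A (R x) y).re = vnormA A x * vnormA A (R x) := by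
      rw [hy, innA_smul_right, innA_self_eq hA (R x), ← Complex.ofReal_mul]
      rw [Complex.ofReal_re]
      field_simp
    have e4 : vnormA A y = vnormA A x := by
      rw [hy, vnormA_smul hA, Complex.norm_real, Real.norm_eq_abs, abs_of_pos (div_pos hnx hnrx)]
      field_simp
    rw [e3, e4] at hkey
    nlinarith

end Aux

theorem stmt10 (A T S : H →L[ℂ] H) (hA : StrictPos A) (hS : IsAAdjoint A T S) :
    (1/4) * opNormA' A (T * S + S * T) ≤ (wA A T)^2 ∧
    (wA A T)^2 ≤ (1/2) * opNormA' A (T * S + S * T) := by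
  classical
  have hsa : ContinuousLinearMap.adjoint A = A :=
    ContinuousLinearMap.isSelfAdjoint_iff'.mp hA.1.isSelfAdjoint
  have hS' : A.comp S = (ContinuousLinearMap.adjoint T).comp A := hS
  have hASy : ∀ y : H, A (S y) = (ContinuousLinearMap.adjoint T) (A y) := by
    intro y
    exact congrArg (fun f : H →L[ℂ] H => f y) hS'
  have hTS : ∀ x y : H, innA A (T x) y = innA A x (S y) := by
    intro x y
    have e1 : innA A x (S y) = inner ℂ x (A (S y)) := by
      rw [innA]
      conv_lhs => rw [← hsa]
      exact ContinuousLinearMap.adjoint_inner_left A (S y) x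
    rw [e1, hASy, ContinuousLinearMap.adjoint_inner_right]
    rw [innA]
    conv_lhs => rw [← hsa]
    exact ContinuousLinearMap.adjoint_inner_left A y (T x)
  have hST : ∀ x y : H, innA A (S x) y = innA A x (T y) := by
    intro x y
    rw [innA, hASy]
    exact ContinuousLinearMap.adjoint_inner_left T y (A x)
  set D : H →L[ℂ] H := T * S + S * T with hD
  have hDapp : ∀ x, D x = T (S x) + S (T x) := fun x => rfl
  have hDsa : ∀ x y, innA A (D x) y = innA A x (D y) := by
    intro x y
    calc innA A (D x) y = innA A (T (S x)) y + innA A (S (T x)) y := by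
          rw [hDapp, Aux.innA_add_left]
    _ = innA A x (T (S y)) + innA A x (S (T y)) := by
          rw [hTS (S x) y, hST x (S y), hST (T x) y, hTS x (T y)]
    _ = innA A x (D y) := by rw [hDapp, Aux.innA_add_right]
  have hSTsa : ∀ x y, innA A ((S * T) x) y = innA A x ((S * T) y) := by
    intro x y
    have : innA A (S (T x)) y = innA A x (S (T y)) := by
      rw [hST (T x) y, hTS x (T y)]
    exact this
  set Wset := {r : ℝ | ∃ x : H, vnormA A x = 1 ∧ r = ‖innA A (T x) x‖}
    with hWset
  set Nset := {r : ℝ | ∃ x : H, vnormA A x = 1 ∧ r = vnormA A (D x)} with hNset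
  have hWeq : wA A T = sSup Wset := rfl
  have hNeq : opNormA' A D = sSup Nset := rfl
  have hTb : ∀ x : H, vnormA A x = 1 → vnormA A (T x) ≤ Real.sqrt ‖S * T‖ := by
    intro x hx
    have h1 : vnormA A (T x) ^ 2 = (innA A x ((S * T) x)).re := by
      rw [Aux.vnormA_sq hA, hTS x (T x)]
      rfl
    have h2 : (innA A x ((S * T) x)).re ≤ ‖S * T‖ := by
      calc (innA A x ((S * T) x)).re ≤ ‖innA A x ((S * T) x)‖ :=
            Complex.re_le_norm _
      _ ≤ vnormA A x * vnormA A ((S * T) x) := Aux.innA_abs_le hA _ _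
      _ ≤ vnormA A x * (‖S * T‖ * vnormA A x) :=
            mul_le_mul_of_nonneg_left (Aux.aselfadj_bound hA hSTsa x) (Aux.vnormA_nonneg _)
      _ = ‖S * T‖ := by rw [hx]; ring
    have h3 : vnormA A (T x) ^ 2 ≤ ‖S * T‖ := h1 ▸ h2
    have h4 := Real.sqrt_le_sqrt h3
    rwa [Real.sqrt_sq (Aux.vnormA_nonneg _)] at h4
  have hWbdd : BddAbove Wset := by
    refine ⟨Real.sqrt ‖S * T‖, ?_⟩
    rintro r ⟨x, hx, rfl⟩
    calc ‖innA A (T x) x‖ ≤ vnormA A (T x) * vnormA A x :=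
          Aux.innA_abs_le hA _ _
    _ = vnormA A (T x) := by rw [hx, mul_one]
    _ ≤ _ := hTb x hx
  have hNbdd : BddAbove Nset := by
    refine ⟨‖D‖, ?_⟩
    rintro r ⟨x, hx, rfl⟩
    calc vnormA A (D x) ≤ ‖D‖ * vnormA A x := Aux.aselfadj_bound hA hDsa x
    _ = ‖D‖ := by rw [hx, mul_one]
  have hW0 : 0 ≤ wA A T := by
    rw [hWeq]
    exact Real.sSup_nonneg (by rintro r ⟨x, hx, rfl⟩; exact norm_nonneg _)
  have hN0 : 0 ≤ opNormA' A D := by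
    rw [hNeq]
    exact Real.sSup_nonneg (by rintro r ⟨x, hx, rfl⟩; exact Aux.vnormA_nonneg _)
  -- upper bound
  have hupper : (wA A T) ^ 2 ≤ 1/2 * opNormA' A D := by
    have hWle : wA A T ≤ Real.sqrt (1/2 * opNormA' A D) := by
      rw [hWeq]
      apply Real.sSup_le
      · rintro r ⟨x, hx, rfl⟩
        have hr0 : (0:ℝ) ≤ ‖innA A (T x) x‖ := norm_nonneg _
        have ha : ‖innA A (T x) x‖ ≤ vnormA A (T x) := by
          calc ‖innA A (T x) x‖ ≤ vnormA A (T x) * vnormA A x :=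
                Aux.innA_abs_le hA _ _
          _ = vnormA A (T x) := by rw [hx, mul_one]
        have hb : ‖innA A (T x) x‖ ≤ vnormA A (S x) := by
          rw [hTS x x]
          calc ‖innA A x (S x)‖ ≤ vnormA A x * vnormA A (S x) :=
                Aux.innA_abs_le hA _ _
          _ = vnormA A (S x) := by rw [hx, one_mul]
        have hsum : vnormA A (T x) ^ 2 + vnormA A (S x) ^ 2 = (innA A (D x) x).re := by
          have c1 : innA A (T (S x)) x = innA A (S x) (S x) := hTS (S x) x
          have c2 : innA A (S (T x)) x = innA A (T x) (T x) := hST (T x) x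
          rw [Aux.vnormA_sq hA, Aux.vnormA_sq hA, hDapp, Aux.innA_add_left, c1, c2,
            Complex.add_re]
          ring
        have hDN : (innA A (D x) x).re ≤ opNormA' A D := by
          calc (innA A (D x) x).re ≤ ‖innA A (D x) x‖ := Complex.re_le_norm _
          _ ≤ vnormA A (D x) * vnormA A x := Aux.innA_abs_le hA _ _
          _ = vnormA A (D x) := by rw [hx, mul_one]
          _ ≤ opNormA' A D := by
              rw [hNeq]
              exact le_csSup hNbdd ⟨x, hx, rfl⟩
        have hr2 : ‖innA A (T x) x‖ ^ 2 ≤ 1/2 * opNormA' A D := by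
          nlinarith [sq_nonneg (vnormA A (T x) - vnormA A (S x))]
        exact Real.le_sqrt_of_sq_le hr2
      · exact Real.sqrt_nonneg _
    have h5 := pow_le_pow_left₀ hW0 hWle 2
    rwa [Real.sq_sqrt (by positivity : (0:ℝ) ≤ 1/2 * opNormA' A D)] at h5
  -- lower bound
  set Hr : H →L[ℂ] H := ((2:ℂ))⁻¹ • (T + S) with hHr
  set Ki : H →L[ℂ] H := (Complex.I / 2) • (S - T) with hKi
  have hHrapp : ∀ x, Hr x = (2:ℂ)⁻¹ • (T x + S x) := fun x => rfl
  have hKiapp : ∀ x, Ki x = (Complex.I / 2) • (S x - T x) := fun x => rfl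
  have hc20 : (starRingEnd ℂ) (2:ℂ) = 2 := Complex.conj_ofNat 2
  have hc2 : (starRingEnd ℂ) ((2:ℂ)⁻¹) = (2:ℂ)⁻¹ := by rw [map_inv₀, hc20]
  have hcI : (starRingEnd ℂ) (Complex.I / 2) = -(Complex.I / 2) := by
    rw [map_div₀, Complex.conj_I, hc20, neg_div]
  have hHrsa : ∀ x y, innA A (Hr x) y = innA A x (Hr y) := by
    intro x y
    rw [hHrapp, hHrapp, Aux.innA_smul_left, Aux.innA_smul_right, Aux.innA_add_left,
      Aux.innA_add_right, hTS x y, hST x y, hc2]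
    ring
  have hKisa : ∀ x y, innA A (Ki x) y = innA A x (Ki y) := by
    intro x y
    rw [hKiapp, hKiapp, Aux.innA_smul_left, Aux.innA_smul_right, Aux.innA_sub_left,
      Aux.innA_sub_right, hTS x y, hST x y, hcI]
    ring
  have hHrw : ∀ x, vnormA A x = 1 → ‖innA A (Hr x) x‖ ≤ wA A T := by
    intro x hx
    have h1 : innA A (Hr x) x = (((innA A (T x) x).re : ℝ) : ℂ) := by
      rw [hHrapp, Aux.innA_smul_left, Aux.innA_add_left, hc2]
      have hc3 : innA A (S x) x = (starRingEnd ℂ) (innA A (T x) x) := by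
        rw [hST x x, Aux.innA_conj_symm hA]
      rw [hc3, Complex.add_conj]
      push_cast
      ring
    rw [h1, Complex.norm_real, Real.norm_eq_abs]
    calc |(innA A (T x) x).re| ≤ ‖innA A (T x) x‖ := Complex.abs_re_le_norm _
    _ ≤ wA A T := by
        rw [hWeq]
        exact le_csSup hWbdd ⟨x, hx, rfl⟩
  have hKiw : ∀ x, vnormA A x = 1 → ‖innA A (Ki x) x‖ ≤ wA A T := by
    intro x hx
    have h1 : innA A (Ki x) x = ((-(innA A (T x) x).im : ℝ) : ℂ) := by
      rw [hKiapp, Aux.innA_smul_left, Aux.innA_sub_left, hcI]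
      have hc3 : innA A (S x) x = (starRingEnd ℂ) (innA A (T x) x) := by
        rw [hST x x, Aux.innA_conj_symm hA]
      rw [hc3]
      set z := innA A (T x) x with hz
      have e : (starRingEnd ℂ) z - z = -(((2 * z.im : ℝ) : ℂ) * Complex.I) := by
        rw [← Complex.sub_conj]
        ring
      rw [e]
      calc -(Complex.I / 2) * -(((2 * z.im : ℝ) : ℂ) * Complex.I)
          = Complex.I * Complex.I * (((2 * z.im : ℝ) : ℂ) / 2) := by ring
        _ = ((-z.im : ℝ) : ℂ) := by
            rw [Complex.I_mul_I]
            push_cast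
            ring
    rw [h1, Complex.norm_real, Real.norm_eq_abs, abs_neg]
    calc |(innA A (T x) x).im| ≤ ‖innA A (T x) x‖ := Complex.abs_im_le_norm _
    _ ≤ wA A T := by
        rw [hWeq]
        exact le_csSup hWbdd ⟨x, hx, rfl⟩
  have hHrop : ∀ z, vnormA A (Hr z) ≤ wA A T * vnormA A z :=
    Aux.aselfadj_numrad hA hHrsa hW0 hHrw
  have hKiop : ∀ z, vnormA A (Ki z) ≤ wA A T * vnormA A z :=
    Aux.aselfadj_numrad hA hKisa hW0 hKiw
  have hImul : (Complex.I / 2) * (Complex.I / 2) = -(4:ℂ)⁻¹ := by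
    rw [div_mul_div_comm, Complex.I_mul_I]
    norm_num
  have hDdecomp : ∀ x, D x = (2:ℂ) • (Hr (Hr x)) + (2:ℂ) • (Ki (Ki x)) := by
    intro x
    rw [hDapp]
    rw [hHrapp x, hHrapp ((2:ℂ)⁻¹ • (T x + S x)), hKiapp x,
      hKiapp ((Complex.I / 2) • (S x - T x))]
    simp only [map_add, map_smul, map_sub, smul_add, smul_sub, smul_smul, hImul]
    module
  have hlower : 1/4 * opNormA' A D ≤ (wA A T) ^ 2 := by
    have hNle : opNormA' A D ≤ 4 * (wA A T) ^ 2 := by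
      rw [hNeq]
      apply Real.sSup_le
      · rintro r ⟨x, hx, rfl⟩
        have h1 : vnormA A (D x)
            ≤ vnormA A ((2:ℂ) • (Hr (Hr x))) + vnormA A ((2:ℂ) • (Ki (Ki x))) := by
          rw [hDdecomp]
          exact Aux.vnormA_add_le hA _ _
        rw [Aux.vnormA_smul hA, Aux.vnormA_smul hA, Complex.norm_two] at h1
        have h2 : vnormA A (Hr (Hr x)) ≤ wA A T * (wA A T * vnormA A x) := by
          calc vnormA A (Hr (Hr x)) ≤ wA A T * vnormA A (Hr x) := hHrop _
          _ ≤ wA A T * (wA A T * vnormA A x) := by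
              exact mul_le_mul_of_nonneg_left (hHrop x) hW0
        have h3 : vnormA A (Ki (Ki x)) ≤ wA A T * (wA A T * vnormA A x) := by
          calc vnormA A (Ki (Ki x)) ≤ wA A T * vnormA A (Ki x) := hKiop _
          _ ≤ wA A T * (wA A T * vnormA A x) := by
              exact mul_le_mul_of_nonneg_left (hKiop x) hW0
        rw [hx] at h2 h3
        nlinarith [h1, h2, h3]
      · positivity
    linarith
  exact ⟨hlower, hupper⟩
end
end

section
/- Let A be a strictly positive operator on H and T ∈ B_A(H). Then (1/16)‖(TT^{♯A}+T^{♯A}T)² + 4(Re_A(T²))²‖_A ≤ w_A(T)⁴ ≤ (1/8)‖TT^{♯A}+T^{♯A}T‖_A² + (1/2)w_A(T²)². -/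
noncomputable section
open Complex ContinuousLinearMap

variable {H : Type*} [NormedAddCommGroup H] [InnerProductSpace ℂ H] [CompleteSpace H]

section Helpers
variable {A R : H →L[ℂ] H}

lemma isAAdjoint_iff_mul {X Y : H →L[ℂ] H} :
    IsAAdjoint A X Y ↔ A * Y = star X * A := by
  rw [IsAAdjoint, ContinuousLinearMap.star_eq_adjoint]; rfl

lemma lem_innA (hR : IsSelfAdjoint R) (hR2 : R * R = A) (x y : H) :
    innA A x y = inner ℂ (R x) (R y) := by
  have : A x = R (R x) := by rw [← hR2]; rfl
  rw [innA, this]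
  exact (ContinuousLinearMap.isSelfAdjoint_iff_isSymmetric.mp hR) (R x) y

lemma lem_vnorm (hR : IsSelfAdjoint R) (hR2 : R * R = A) (x : H) :
    vnormA A x = ‖R x‖ := by
  rw [vnormA, lem_innA hR hR2, inner_self_eq_norm_sq_to_K (𝕜 := ℂ)]
  show Real.sqrt ((((‖R x‖ : ℝ) : ℂ) ^ 2).re) = ‖R x‖
  rw [← Complex.ofReal_pow, Complex.ofReal_re, Real.sqrt_sq (norm_nonneg _)]

lemma lem_Asa (hR : IsSelfAdjoint R) (hR2 : R * R = A) : IsSelfAdjoint A := by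
  rw [← hR2, IsSelfAdjoint, star_mul, hR.star_eq]

lemma adj_symm (hR : IsSelfAdjoint R) (hR2 : R * R = A) {X Y : H →L[ℂ] H}
    (h : IsAAdjoint A X Y) : IsAAdjoint A Y X := by
  rw [isAAdjoint_iff_mul] at h ⊢
  have := congrArg star h
  rw [star_mul, star_mul, star_star, (lem_Asa hR hR2).star_eq] at this
  exact this.symm

lemma adj_mul {X Y X' Y' : H →L[ℂ] H} (h : IsAAdjoint A X Y) (h' : IsAAdjoint A X' Y') :
    IsAAdjoint A (X * X') (Y' * Y) := by
  rw [isAAdjoint_iff_mul] at h h' ⊢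
  rw [star_mul, ← mul_assoc, h', mul_assoc, h, mul_assoc]

lemma adj_add {X Y X' Y' : H →L[ℂ] H} (h : IsAAdjoint A X Y) (h' : IsAAdjoint A X' Y') :
    IsAAdjoint A (X + X') (Y + Y') := by
  rw [isAAdjoint_iff_mul] at h h' ⊢
  rw [mul_add, h, h', star_add, add_mul]

lemma adj_neg {X Y : H →L[ℂ] H} (h : IsAAdjoint A X Y) : IsAAdjoint A (-X) (-Y) := by
  rw [isAAdjoint_iff_mul] at h ⊢
  rw [mul_neg, h, star_neg, neg_mul]

lemma adj_smul (c : ℂ) {X Y : H →L[ℂ] H} (h : IsAAdjoint A X Y) :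
    IsAAdjoint A (c • X) ((starRingEnd ℂ c) • Y) := by
  rw [isAAdjoint_iff_mul] at h ⊢
  rw [mul_smul_comm, h, star_smul, smul_mul_assoc]
  rfl

lemma lem_move (hR : IsSelfAdjoint R) (hR2 : R * R = A) {X Y : H →L[ℂ] H}
    (h : IsAAdjoint A X Y) (x y : H) :
    (inner ℂ (R (X x)) (R y) : ℂ) = inner ℂ (R x) (R (Y y)) := by
  have h1 : A * X = star Y * A := by
    rw [isAAdjoint_iff_mul] at h
    have := congrArg star h
    rw [star_mul, star_mul, star_star, (lem_Asa hR hR2).star_eq] at this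
    exact this.symm
  have l1 : (inner ℂ (R (X x)) (R y) : ℂ) = inner ℂ (A (X x)) y := (lem_innA hR hR2 _ _).symm
  have l2 : (inner ℂ (R x) (R (Y y)) : ℂ) = inner ℂ (A x) (Y y) := (lem_innA hR hR2 _ _).symm
  rw [l1, l2]
  have : A (X x) = (star Y) (A x) := by
    have := congrFun (congrArg DFunLike.coe h1) x
    simpa using this
  rw [this, ContinuousLinearMap.star_eq_adjoint, ContinuousLinearMap.adjoint_inner_left]

lemma adj_one : IsAAdjoint A (1 : H →L[ℂ] H) 1 := by
  rw [isAAdjoint_iff_mul]; simp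

lemma adj_pow (hR : IsSelfAdjoint R) (hR2 : R * R = A) {D : H →L[ℂ] H}
    (hD : IsAAdjoint A D D) (n : ℕ) : IsAAdjoint A (D ^ n) (D ^ n) := by
  induction n with
  | zero => simpa using (adj_one (A := A))
  | succ n ih =>
      have := adj_mul ih hD
      rwa [← pow_succ, ← pow_succ'] at this

lemma lem_bdd (hR : IsSelfAdjoint R) (hR2 : R * R = A) {X Y : H →L[ℂ] H}
    (h : IsAAdjoint A X Y) : ∀ x : H, ‖R (X x)‖ ^ 2 ≤ ‖Y * X‖ * ‖R x‖ ^ 2 := by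
  intro x
  set D : H →L[ℂ] H := Y * X with hDdef
  have hD : IsAAdjoint A D D := adj_mul (adj_symm hR hR2 h) h
  -- key inner product step
  have key : ∀ (m : ℕ) (z : H), ‖R ((D ^ m) z)‖ ^ 2 ≤ ‖R z‖ * ‖R ((D ^ (2 * m)) z)‖ := by
    intro m z
    have e1 : (inner ℂ (R ((D ^ m) z)) (R ((D ^ m) z)) : ℂ) = inner ℂ (R z) (R ((D ^ (2 * m)) z)) := by
      rw [lem_move hR hR2 (adj_pow hR hR2 hD m) z ((D ^ m) z)]
      have e : (D ^ m) ((D ^ m) z) = (D ^ (2 * m)) z := by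
        rw [← ContinuousLinearMap.mul_apply, ← pow_add, two_mul]
      rw [e]
    have e2 : ‖R ((D ^ m) z)‖ ^ 2 = ((inner ℂ (R ((D ^ m) z)) (R ((D ^ m) z)) : ℂ)).re := by
      rw [inner_self_eq_norm_sq_to_K (𝕜 := ℂ)]
      show _ = ((((‖R ((D ^ m) z)‖ : ℝ) : ℂ)) ^ 2).re
      rw [← Complex.ofReal_pow, Complex.ofReal_re]
    rw [e2, e1]
    calc (inner ℂ (R z) (R ((D ^ (2 * m)) z)) : ℂ).re ≤ ‖(inner ℂ (R z) (R ((D ^ (2*m)) z)) : ℂ)‖ := Complex.re_le_norm _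
      _ ≤ ‖R z‖ * ‖R ((D ^ (2*m)) z)‖ := by
          exact norm_inner_le_norm _ _
  -- base step
  have base : ‖R (X x)‖ ^ 2 ≤ ‖R x‖ * ‖R (D x)‖ := by
    have e1 : (inner ℂ (R (X x)) (R (X x)) : ℂ) = inner ℂ (R x) (R (D x)) := by
      rw [lem_move hR hR2 h x (X x)]
      rfl
    have e2 : ‖R (X x)‖ ^ 2 = ((inner ℂ (R (X x)) (R (X x)) : ℂ)).re := by
      rw [inner_self_eq_norm_sq_to_K (𝕜 := ℂ)]
      show _ = ((((‖R (X x)‖ : ℝ) : ℂ)) ^ 2).re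
      rw [← Complex.ofReal_pow, Complex.ofReal_re]
    rw [e2, e1]
    calc (inner ℂ (R x) (R (D x)) : ℂ).re ≤ ‖(inner ℂ (R x) (R (D x)) : ℂ)‖ := Complex.re_le_norm _
      _ ≤ ‖R x‖ * ‖R (D x)‖ := by
          exact norm_inner_le_norm _ _
  set u : ℕ → ℝ := fun n => ‖R ((D ^ (2 ^ n)) x)‖ with hu
  have hu0 : ∀ n, 0 ≤ u n := fun n => norm_nonneg _
  have hrec : ∀ n, u n ^ 2 ≤ ‖R x‖ * u (n + 1) := by
    intro n
    have := key (2 ^ n) x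
    rwa [← pow_succ'] at this
  have hubnd : ∀ n, u n ≤ ‖R‖ * ‖x‖ * ‖D‖ ^ (2 ^ n) := by
    intro n
    calc u n ≤ ‖R‖ * ‖(D ^ (2 ^ n)) x‖ := R.le_opNorm _
      _ ≤ ‖R‖ * (‖D ^ (2 ^ n)‖ * ‖x‖) := by
          gcongr; exact (D ^ (2 ^ n)).le_opNorm x
      _ ≤ ‖R‖ * (‖D‖ ^ (2 ^ n) * ‖x‖) := by
          gcongr; exact norm_pow_le' D (pow_pos two_pos n)
      _ = ‖R‖ * ‖x‖ * ‖D‖ ^ (2 ^ n) := by ring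
  -- main claim : u 0 ≤ ‖D‖ * ‖R x‖
  have claim : u 0 ≤ ‖D‖ * ‖R x‖ := by
    by_cases hx : ‖R x‖ = 0
    · have h1 : u 0 ^ 2 ≤ 0 := by
        have := hrec 0; rw [hx] at this; simpa using this
      have : u 0 = 0 := by nlinarith [hu0 0]
      rw [this]; positivity
    · have ht : 0 < ‖R x‖ := lt_of_le_of_ne (norm_nonneg _) (Ne.symm hx)
      by_cases hd : ‖D‖ = 0
      · have hD0 : D = 0 := norm_eq_zero.mp hd
        have h1 : u 1 = 0 := by
          show ‖R ((D ^ (2 ^ 1)) x)‖ = 0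
          rw [hD0]
          norm_num
        have h2 : u 0 ^ 2 ≤ 0 := by
          have := hrec 0; rw [h1] at this; simpa using this
        have : u 0 = 0 := by nlinarith [hu0 0]
        rw [this]; positivity
      · have hdpos : 0 < ‖D‖ := lt_of_le_of_ne (norm_nonneg _) (Ne.symm hd)
        by_contra hcon
        push_neg at hcon
        set t := ‖R x‖
        set d := ‖D‖
        set r := u 0 / (d * t) with hr
        have hdt : 0 < d * t := mul_pos hdpos ht
        have hrgt : 1 < r := (one_lt_div hdt).mpr hcon
        have hind : ∀ n, u 0 ^ (2 ^ n) * t ≤ u n * t ^ (2 ^ n) := by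
          intro n
          induction n with
          | zero => simp
          | succ n ih =>
              have hs : (u 0 ^ (2 ^ n) * t) ^ 2 ≤ (u n * t ^ (2 ^ n)) ^ 2 := by
                apply pow_le_pow_left₀ (by positivity) ih
              have hs2 : (u n * t ^ (2 ^ n)) ^ 2 = u n ^ 2 * (t ^ (2 ^ n)) ^ 2 := by ring
              have hs3 : u n ^ 2 * (t ^ (2 ^ n)) ^ 2 ≤ (t * u (n+1)) * (t ^ (2 ^ n)) ^ 2 := by
                apply mul_le_mul_of_nonneg_right (hrec n) (by positivity)
              have hexp : (2 : ℕ) ^ (n + 1) = 2 ^ n * 2 := by rw [pow_succ]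
              have hgoal : u 0 ^ (2 ^ (n+1)) * t * t ≤ u (n+1) * t ^ (2 ^ (n+1)) * t := by
                calc u 0 ^ (2 ^ (n+1)) * t * t = (u 0 ^ (2 ^ n) * t) ^ 2 := by
                      rw [hexp, pow_mul]; ring
                  _ ≤ (t * u (n+1)) * (t ^ (2 ^ n)) ^ 2 := le_trans hs (by rw [hs2]; exact hs3)
                  _ = u (n+1) * t ^ (2 ^ (n+1)) * t := by
                      rw [hexp, pow_mul]; ring
              exact le_of_mul_le_mul_right hgoal ht
        have hC : ∀ n, r ^ (2 ^ n) * t ≤ ‖R‖ * ‖x‖ := by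
          intro n
          have h1 : u 0 ^ (2 ^ n) * t ≤ (‖R‖ * ‖x‖) * d ^ (2 ^ n) * t ^ (2 ^ n) := by
            calc u 0 ^ (2 ^ n) * t ≤ u n * t ^ (2 ^ n) := hind n
              _ ≤ (‖R‖ * ‖x‖ * d ^ (2 ^ n)) * t ^ (2 ^ n) := by
                  apply mul_le_mul_of_nonneg_right (hubnd n) (by positivity)
              _ = (‖R‖ * ‖x‖) * d ^ (2 ^ n) * t ^ (2 ^ n) := by ring
          have hu0r : u 0 = r * (d * t) := by
            rw [hr]; field_simp
          rw [hu0r, mul_pow, mul_pow] at h1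
          have h2 : r ^ (2 ^ n) * t * (d ^ (2 ^ n) * t ^ (2 ^ n)) ≤
              (‖R‖ * ‖x‖) * (d ^ (2 ^ n) * t ^ (2 ^ n)) := by
            calc r ^ (2 ^ n) * t * (d ^ (2 ^ n) * t ^ (2 ^ n))
                = r ^ (2 ^ n) * (d ^ (2 ^ n) * t ^ (2 ^ n)) * t := by ring
              _ ≤ (‖R‖ * ‖x‖) * d ^ (2 ^ n) * t ^ (2 ^ n) := h1
              _ = (‖R‖ * ‖x‖) * (d ^ (2 ^ n) * t ^ (2 ^ n)) := by ring
          exact le_of_mul_le_mul_right h2 (by positivity)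
        obtain ⟨n, hn⟩ := pow_unbounded_of_one_lt (‖R‖ * ‖x‖ / t) hrgt
        have h3 : r ^ n ≤ r ^ (2 ^ n) := pow_le_pow_right₀ (le_of_lt hrgt) (Nat.le_of_lt (Nat.lt_two_pow_self (n := n)))
        have h4 : r ^ (2 ^ n) ≤ ‖R‖ * ‖x‖ / t := by
          rw [le_div_iff₀ ht]; exact hC n
        have : ‖R‖ * ‖x‖ / t < ‖R‖ * ‖x‖ / t := lt_of_lt_of_le (lt_of_lt_of_le hn h3) h4
        exact lt_irrefl _ this
  calc ‖R (X x)‖ ^ 2 ≤ ‖R x‖ * u 0 := base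
    _ ≤ ‖R x‖ * (‖D‖ * ‖R x‖) := mul_le_mul_of_nonneg_left claim (norm_nonneg _)
    _ = ‖D‖ * ‖R x‖ ^ 2 := by ring

lemma sqb_of (hR : IsSelfAdjoint R) (hR2 : R * R = A) {X Y : H →L[ℂ] H}
    (h : IsAAdjoint A X Y) :
    ∃ c : ℝ, 0 ≤ c ∧ ∀ x, ‖R (X x)‖ ≤ c * ‖R x‖ := by
  refine ⟨Real.sqrt ‖Y * X‖, Real.sqrt_nonneg _, fun x => ?_⟩
  have h1 := lem_bdd hR hR2 h x
  calc ‖R (X x)‖ = Real.sqrt (‖R (X x)‖ ^ 2) := (Real.sqrt_sq (norm_nonneg _)).symm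
    _ ≤ Real.sqrt (‖Y * X‖ * ‖R x‖ ^ 2) := Real.sqrt_le_sqrt h1
    _ = Real.sqrt ‖Y * X‖ * ‖R x‖ := by
        rw [Real.sqrt_mul (norm_nonneg _), Real.sqrt_sq (norm_nonneg _)]

lemma opA_nonneg (A X : H →L[ℂ] H) : 0 ≤ opNormA' A X := by
  apply Real.sSup_nonneg
  rintro r ⟨x, hx, rfl⟩
  exact Real.sqrt_nonneg _

lemma wA_nonneg (A X : H →L[ℂ] H) : 0 ≤ wA A X := by
  apply Real.sSup_nonneg
  rintro r ⟨x, hx, rfl⟩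
  exact norm_nonneg _

section PtBounds
variable {X : H →L[ℂ] H} {c : ℝ}

lemma opA_le (hR : IsSelfAdjoint R) (hR2 : R * R = A) (hc : 0 ≤ c)
    (hb : ∀ x, ‖R x‖ = 1 → ‖R (X x)‖ ≤ c) : opNormA' A X ≤ c := by
  apply Real.sSup_le _ hc
  rintro r ⟨x, hx, rfl⟩
  rw [lem_vnorm hR hR2] at hx ⊢
  exact hb x hx

lemma wA_le (hR : IsSelfAdjoint R) (hR2 : R * R = A) (hc : 0 ≤ c)
    (hb : ∀ x, ‖R x‖ = 1 → ‖(inner ℂ (R (X x)) (R x) : ℂ)‖ ≤ c) : wA A X ≤ c := by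
  apply Real.sSup_le _ hc
  rintro r ⟨x, hx, rfl⟩
  rw [lem_vnorm hR hR2] at hx
  rw [lem_innA hR hR2]
  exact hb x hx

lemma opA_bdd (hR : IsSelfAdjoint R) (hR2 : R * R = A) (hb : ∀ x, ‖R (X x)‖ ≤ c * ‖R x‖) :
    BddAbove {r : ℝ | ∃ x : H, vnormA A x = 1 ∧ r = vnormA A (X x)} := by
  refine ⟨c, ?_⟩
  rintro r ⟨x, hx, rfl⟩
  rw [lem_vnorm hR hR2] at hx ⊢
  calc ‖R (X x)‖ ≤ c * ‖R x‖ := hb x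
    _ = c := by rw [hx, mul_one]

lemma wA_bdd (hR : IsSelfAdjoint R) (hR2 : R * R = A) (hb : ∀ x, ‖R (X x)‖ ≤ c * ‖R x‖) :
    BddAbove {r : ℝ | ∃ x : H, vnormA A x = 1 ∧ r = ‖(innA A (X x) x)‖} := by
  refine ⟨c, ?_⟩
  rintro r ⟨x, hx, rfl⟩
  rw [lem_vnorm hR hR2] at hx
  rw [lem_innA hR hR2]
  calc ‖(inner ℂ (R (X x)) (R x) : ℂ)‖ ≤ ‖R (X x)‖ * ‖R x‖ := by
        exact norm_inner_le_norm _ _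
    _ ≤ (c * ‖R x‖) * ‖R x‖ := by
        apply mul_le_mul_of_nonneg_right (hb x) (norm_nonneg _)
    _ = c := by rw [hx]; ring

lemma mem_le_opA (hR : IsSelfAdjoint R) (hR2 : R * R = A)
    (hb : ∀ x, ‖R (X x)‖ ≤ c * ‖R x‖) {x : H} (hx : ‖R x‖ = 1) :
    ‖R (X x)‖ ≤ opNormA' A X := by
  apply le_csSup (opA_bdd hR hR2 hb)
  exact ⟨x, by rw [lem_vnorm hR hR2]; exact hx, by rw [lem_vnorm hR hR2]⟩

lemma mem_le_wA (hR : IsSelfAdjoint R) (hR2 : R * R = A)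
    (hb : ∀ x, ‖R (X x)‖ ≤ c * ‖R x‖) {x : H} (hx : ‖R x‖ = 1) :
    ‖(inner ℂ (R (X x)) (R x) : ℂ)‖ ≤ wA A X := by
  apply le_csSup (wA_bdd hR hR2 hb)
  exact ⟨x, by rw [lem_vnorm hR hR2]; exact hx, by rw [lem_innA hR hR2]⟩

lemma opA_pt (hR : IsSelfAdjoint R) (hR2 : R * R = A)
    (hb : ∀ x, ‖R (X x)‖ ≤ c * ‖R x‖) (x : H) :
    ‖R (X x)‖ ≤ opNormA' A X * ‖R x‖ := by
  by_cases hx : ‖R x‖ = 0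
  · have : ‖R (X x)‖ ≤ 0 := by
      calc ‖R (X x)‖ ≤ c * ‖R x‖ := hb x
        _ = 0 := by rw [hx, mul_zero]
    rw [hx, mul_zero]
    exact this
  · have ht : 0 < ‖R x‖ := lt_of_le_of_ne (norm_nonneg _) (Ne.symm hx)
    set t := ‖R x‖ with htdef
    set y := t⁻¹ • x with hy
    have hRy : R y = t⁻¹ • R x := by rw [hy, ContinuousLinearMap.map_smul_of_tower]
    have hXy : X y = t⁻¹ • X x := by rw [hy, ContinuousLinearMap.map_smul_of_tower]
    have hy1 : ‖R y‖ = 1 := by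
      rw [hRy, norm_smul, Real.norm_eq_abs, abs_of_pos (inv_pos.mpr ht), ← htdef,
        inv_mul_cancel₀ (ne_of_gt ht)]
    have h2 : ‖R (X y)‖ ≤ opNormA' A X := mem_le_opA hR hR2 hb hy1
    rw [hXy, ContinuousLinearMap.map_smul_of_tower, norm_smul, Real.norm_eq_abs,
      abs_of_pos (inv_pos.mpr ht)] at h2
    calc ‖R (X x)‖ = (t⁻¹ * ‖R (X x)‖) * t := by field_simp
      _ ≤ opNormA' A X * t := mul_le_mul_of_nonneg_right h2 (le_of_lt ht)

lemma wA_pt (hR : IsSelfAdjoint R) (hR2 : R * R = A)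
    (hb : ∀ x, ‖R (X x)‖ ≤ c * ‖R x‖) (x : H) :
    ‖(inner ℂ (R (X x)) (R x) : ℂ)‖ ≤ wA A X * ‖R x‖ ^ 2 := by
  by_cases hx : ‖R x‖ = 0
  · have h0 : R x = 0 := norm_eq_zero.mp hx
    rw [h0, inner_zero_right, norm_zero]
    exact mul_nonneg (wA_nonneg A X) (by positivity)
  · have ht : 0 < ‖R x‖ := lt_of_le_of_ne (norm_nonneg _) (Ne.symm hx)
    set t := ‖R x‖ with htdef
    set y := t⁻¹ • x with hy
    have hsm : ∀ v : H, t⁻¹ • v = ((t⁻¹ : ℝ) : ℂ) • v := fun v => by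
      rw [← algebraMap_smul (R := ℝ) ℂ t⁻¹ v]; rfl
    have hRy : R y = t⁻¹ • R x := by rw [hy, ContinuousLinearMap.map_smul_of_tower]
    have hXy : X y = t⁻¹ • X x := by rw [hy, ContinuousLinearMap.map_smul_of_tower]
    have hy1 : ‖R y‖ = 1 := by
      rw [hRy, norm_smul, Real.norm_eq_abs, abs_of_pos (inv_pos.mpr ht), ← htdef,
        inv_mul_cancel₀ (ne_of_gt ht)]
    have h2 : ‖(inner ℂ (R (X y)) (R y) : ℂ)‖ ≤ wA A X := mem_le_wA hR hR2 hb hy1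
    have h3 : (inner ℂ (R (X y)) (R y) : ℂ)
        = ((t⁻¹ : ℝ) : ℂ) * (((t⁻¹ : ℝ) : ℂ) * inner ℂ (R (X x)) (R x)) := by
      rw [hXy, ContinuousLinearMap.map_smul_of_tower, hRy, hsm (R (X x)), hsm (R x),
        inner_smul_left, inner_smul_right, Complex.conj_ofReal]
    rw [h3, norm_mul, norm_mul] at h2
    have habs : ‖((t⁻¹ : ℝ) : ℂ)‖ = t⁻¹ := by
      rw [Complex.norm_real, Real.norm_eq_abs, abs_of_pos (inv_pos.mpr ht)]
    rw [habs] at h2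
    calc ‖(inner ℂ (R (X x)) (R x) : ℂ)‖
        = (t⁻¹ * (t⁻¹ * ‖(inner ℂ (R (X x)) (R x) : ℂ)‖)) * t ^ 2 := by
          rw [pow_two]
          field_simp
      _ ≤ wA A X * t ^ 2 := mul_le_mul_of_nonneg_right h2 (by positivity)

end PtBounds

lemma re_inner_self (u : H) : ((inner ℂ u u : ℂ)).re = ‖u‖ ^ 2 := by
  rw [inner_self_eq_norm_sq_to_K (𝕜 := ℂ)]
  show ((((‖u‖ : ℝ) : ℂ)) ^ 2).re = _
  rw [← Complex.ofReal_pow, Complex.ofReal_re]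

lemma opA_mul_le {X : H →L[ℂ] H} {c : ℝ} (hR : IsSelfAdjoint R) (hR2 : R * R = A)
    (hc : 0 ≤ c) (hb : ∀ x, ‖R (X x)‖ ≤ c * ‖R x‖) :
    opNormA' A (X * X) ≤ opNormA' A X ^ 2 := by
  apply opA_le hR hR2 (pow_nonneg (opA_nonneg A X) 2)
  intro x hx
  have h1 : ‖R ((X * X) x)‖ = ‖R (X (X x))‖ := rfl
  rw [h1, pow_two]
  calc ‖R (X (X x))‖ ≤ opNormA' A X * ‖R (X x)‖ := opA_pt hR hR2 hb _
    _ ≤ opNormA' A X * (opNormA' A X * ‖R x‖) :=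
        mul_le_mul_of_nonneg_left (opA_pt hR hR2 hb x) (opA_nonneg A X)
    _ = opNormA' A X * opNormA' A X := by rw [hx, mul_one]

lemma opA_sq {X : H →L[ℂ] H} {c : ℝ} (hR : IsSelfAdjoint R) (hR2 : R * R = A)
    (hXX : IsAAdjoint A X X) (hc : 0 ≤ c) (hb : ∀ x, ‖R (X x)‖ ≤ c * ‖R x‖) :
    opNormA' A (X * X) = opNormA' A X ^ 2 := by
  refine le_antisymm (opA_mul_le hR hR2 hc hb) ?_
  have hbb : ∀ x, ‖R ((X * X) x)‖ ≤ (c * c) * ‖R x‖ := by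
    intro x
    have h1 : ‖R ((X * X) x)‖ = ‖R (X (X x))‖ := rfl
    rw [h1]
    calc ‖R (X (X x))‖ ≤ c * ‖R (X x)‖ := hb _
      _ ≤ c * (c * ‖R x‖) := mul_le_mul_of_nonneg_left (hb x) hc
      _ = (c * c) * ‖R x‖ := by ring
  set M := opNormA' A (X * X) with hM
  have hM0 : 0 ≤ M := opA_nonneg A _
  have hN : opNormA' A X ≤ Real.sqrt M := by
    apply opA_le hR hR2 (Real.sqrt_nonneg _)
    intro x hx
    have h1 : ‖R (X x)‖ ^ 2 ≤ M := by
      have e1 : (inner ℂ (R (X x)) (R (X x)) : ℂ) = inner ℂ (R x) (R (X (X x))) :=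
        lem_move hR hR2 hXX x (X x)
      have e2 : ‖R (X x)‖ ^ 2 = ((inner ℂ (R (X x)) (R (X x)) : ℂ)).re := (re_inner_self _).symm
      rw [e2, e1]
      calc ((inner ℂ (R x) (R (X (X x))) : ℂ)).re
          ≤ ‖((inner ℂ (R x) (R (X (X x))) : ℂ))‖ := Complex.re_le_norm _
        _ ≤ ‖R x‖ * ‖R (X (X x))‖ := by
            exact norm_inner_le_norm _ _
        _ = ‖R ((X * X) x)‖ := by rw [hx, one_mul]; rfl
        _ ≤ M := mem_le_opA hR hR2 hbb hx
    calc ‖R (X x)‖ = Real.sqrt (‖R (X x)‖ ^ 2) := (Real.sqrt_sq (norm_nonneg _)).symm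
      _ ≤ Real.sqrt M := Real.sqrt_le_sqrt h1
  calc opNormA' A X ^ 2 ≤ Real.sqrt M ^ 2 :=
      pow_le_pow_left₀ (opA_nonneg A X) hN 2
    _ = M := Real.sq_sqrt hM0

lemma opA_add_le {X Y : H →L[ℂ] H} {c d : ℝ} (hR : IsSelfAdjoint R) (hR2 : R * R = A)
    (hb : ∀ x, ‖R (X x)‖ ≤ c * ‖R x‖) (hb' : ∀ x, ‖R (Y x)‖ ≤ d * ‖R x‖) :
    opNormA' A (X + Y) ≤ opNormA' A X + opNormA' A Y := by
  apply opA_le hR hR2 (add_nonneg (opA_nonneg A X) (opA_nonneg A Y))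
  intro x hx
  have h1 : R ((X + Y) x) = R (X x) + R (Y x) := by
    rw [ContinuousLinearMap.add_apply, map_add]
  rw [h1]
  calc ‖R (X x) + R (Y x)‖ ≤ ‖R (X x)‖ + ‖R (Y x)‖ := norm_add_le _ _
    _ ≤ opNormA' A X * ‖R x‖ + opNormA' A Y * ‖R x‖ :=
        add_le_add (opA_pt hR hR2 hb x) (opA_pt hR hR2 hb' x)
    _ = opNormA' A X + opNormA' A Y := by rw [hx, mul_one, mul_one]

lemma opA_smul_le {X : H →L[ℂ] H} {c : ℝ} (hR : IsSelfAdjoint R) (hR2 : R * R = A)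
    (μ : ℂ) (hb : ∀ x, ‖R (X x)‖ ≤ c * ‖R x‖) :
    opNormA' A (μ • X) ≤ ‖μ‖ * opNormA' A X := by
  apply opA_le hR hR2 (mul_nonneg (norm_nonneg _) (opA_nonneg A X))
  intro x hx
  have h1 : R ((μ • X) x) = μ • R (X x) := by
    rw [ContinuousLinearMap.smul_apply, map_smul]
  rw [h1, norm_smul]
  calc ‖μ‖ * ‖R (X x)‖ ≤ ‖μ‖ * (opNormA' A X * ‖R x‖) :=
      mul_le_mul_of_nonneg_left (opA_pt hR hR2 hb x) (norm_nonneg _)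
    _ = ‖μ‖ * opNormA' A X := by rw [hx]; ring

lemma norm_eq_w {X : H →L[ℂ] H} {c : ℝ} (hR : IsSelfAdjoint R) (hR2 : R * R = A)
    (hXX : IsAAdjoint A X X) (hc : 0 ≤ c) (hb : ∀ x, ‖R (X x)‖ ≤ c * ‖R x‖) :
    opNormA' A X = wA A X := by
  refine le_antisymm ?_ ?_
  · -- polarization direction
    apply opA_le hR hR2 (wA_nonneg A X)
    intro x hx
    by_cases h0 : ‖R (X x)‖ = 0
    · rw [h0]; exact wA_nonneg A X
    · have hs : 0 < ‖R (X x)‖ := lt_of_le_of_ne (norm_nonneg _) (Ne.symm h0)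
      set s := ‖R (X x)‖ with hsdef
      set y := s⁻¹ • X x with hy
      have hsm : ∀ v : H, s⁻¹ • v = ((s⁻¹ : ℝ) : ℂ) • v := fun v => by
        rw [← algebraMap_smul (R := ℝ) ℂ s⁻¹ v]; rfl
      have hRy : R y = s⁻¹ • R (X x) := by rw [hy, ContinuousLinearMap.map_smul_of_tower]
      have hy1 : ‖R y‖ = 1 := by
        rw [hRy, norm_smul, Real.norm_eq_abs, abs_of_pos (inv_pos.mpr hs), ← hsdef,
          inv_mul_cancel₀ (ne_of_gt hs)]
      -- re ⟨R (X x), R y⟩ = s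
      have hres : ((inner ℂ (R (X x)) (R y) : ℂ)).re = s := by
        rw [hRy, hsm, inner_smul_right]
        have : (inner ℂ (R (X x)) (R (X x)) : ℂ) = ((s ^ 2 : ℝ) : ℂ) := by
          rw [inner_self_eq_norm_sq_to_K (𝕜 := ℂ)]
          norm_cast
        rw [this, ← Complex.ofReal_mul, Complex.ofReal_re]
        field_simp
      -- polarization identity
      have expand : ((inner ℂ (R (X (x + y))) (R (x + y)) : ℂ)).re
          - ((inner ℂ (R (X (x - y))) (R (x - y)) : ℂ)).re
          = 2 * ((inner ℂ (R (X x)) (R y) : ℂ)).re + 2 * ((inner ℂ (R (X y)) (R x) : ℂ)).re := by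
        simp only [map_add, map_sub, inner_add_left, inner_add_right, inner_sub_left,
          inner_sub_right, Complex.add_re, Complex.sub_re]
        ring
      have hconj : ((inner ℂ (R (X y)) (R x) : ℂ)).re = ((inner ℂ (R (X x)) (R y) : ℂ)).re := by
        have e1 : (inner ℂ (R (X y)) (R x) : ℂ) = inner ℂ (R y) (R (X x)) :=
          lem_move hR hR2 hXX y x
        rw [e1, ← inner_conj_symm]
        exact Complex.conj_re _
      have habs1 : ((inner ℂ (R (X (x+y))) (R (x+y)) : ℂ)).re ≤ wA A X * ‖R (x+y)‖ ^ 2 := by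
        calc ((inner ℂ (R (X (x+y))) (R (x+y)) : ℂ)).re
            ≤ ‖_‖ := Complex.re_le_norm _
          _ ≤ wA A X * ‖R (x+y)‖ ^ 2 := wA_pt hR hR2 hb _
      have habs2 : -(((inner ℂ (R (X (x-y))) (R (x-y)) : ℂ)).re) ≤ wA A X * ‖R (x-y)‖ ^ 2 := by
        calc -(((inner ℂ (R (X (x-y))) (R (x-y)) : ℂ)).re)
            ≤ |((inner ℂ (R (X (x-y))) (R (x-y)) : ℂ)).re| := neg_le_abs _
          _ ≤ ‖_‖ := Complex.abs_re_le_norm _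
          _ ≤ wA A X * ‖R (x-y)‖ ^ 2 := wA_pt hR hR2 hb _
      have hpar : ‖R (x+y)‖ ^ 2 + ‖R (x-y)‖ ^ 2 = 2 * (‖R x‖ ^ 2 + ‖R y‖ ^ 2) := by
        have e1 : R (x + y) = R x + R y := map_add _ _ _
        have e2 : R (x - y) = R x - R y := map_sub _ _ _
        rw [e1, e2]
        have := parallelogram_law_with_norm ℂ (R x) (R y)
        linarith [this]
      have hw0 : 0 ≤ wA A X := wA_nonneg A X
      have key : 4 * s ≤ wA A X * 4 := by
        have h1 : 4 * s = 2 * ((inner ℂ (R (X x)) (R y) : ℂ)).re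
            + 2 * ((inner ℂ (R (X y)) (R x) : ℂ)).re := by
          rw [hconj, hres]; ring
        calc 4 * s = ((inner ℂ (R (X (x + y))) (R (x + y)) : ℂ)).re
              - ((inner ℂ (R (X (x - y))) (R (x - y)) : ℂ)).re := by rw [expand, ← h1]
          _ ≤ wA A X * ‖R (x+y)‖ ^ 2 + wA A X * ‖R (x-y)‖ ^ 2 := by linarith [habs1, habs2]
          _ = wA A X * (‖R (x+y)‖ ^ 2 + ‖R (x-y)‖ ^ 2) := by ring
          _ = wA A X * (2 * (‖R x‖ ^ 2 + ‖R y‖ ^ 2)) := by rw [hpar]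
          _ = wA A X * 4 := by rw [hx, hy1]; ring
      linarith [key]
  · -- easy direction
    apply wA_le hR hR2 (opA_nonneg A X)
    intro x hx
    calc ‖(inner ℂ (R (X x)) (R x) : ℂ)‖ ≤ ‖R (X x)‖ * ‖R x‖ := by
          exact norm_inner_le_norm _ _
      _ = ‖R (X x)‖ := by rw [hx, mul_one]
      _ ≤ opNormA' A X := mem_le_opA hR hR2 hb hx

lemma exists_sqrt (A : H →L[ℂ] H) (hA : A.IsPositive) :
    ∃ R : H →L[ℂ] H, IsSelfAdjoint R ∧ R * R = A := by
  have h0 : (0:H →L[ℂ] H) ≤ A := (ContinuousLinearMap.nonneg_iff_isPositive A).mpr hA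
  exact ⟨CFC.sqrt A, IsSelfAdjoint.of_nonneg (CFC.sqrt_nonneg A), CFC.sqrt_mul_sqrt_self A h0⟩

set_option maxHeartbeats 1000000 in
theorem stmt11' (A T S : H →L[ℂ] H) (hA : A.IsPositive) (hS : IsAAdjoint A T S) :
    (1/16) * opNormA' A ((T * S + S * T)^2 + (4:ℂ) • ((2:ℂ)⁻¹ • (T^2 + S^2))^2) ≤ (wA A T)^4 ∧
    (wA A T)^4 ≤ (1/8) * (opNormA' A (T * S + S * T))^2 + (1/2) * (wA A (T^2))^2 := by
  obtain ⟨R, hR, hR2⟩ := exists_sqrt A hA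
  -- adjoint pairs
  have hTS : IsAAdjoint A T S := hS
  have hST : IsAAdjoint A S T := adj_symm hR hR2 hTS
  have hTT : IsAAdjoint A (T * T) (S * S) := adj_mul hTS hTS
  have hSS : IsAAdjoint A (S * S) (T * T) := adj_mul hST hST
  have ha : IsAAdjoint A (T * S + S * T) (T * S + S * T) :=
    adj_add (adj_mul hTS hST) (adj_mul hST hTS)
  have hu : IsAAdjoint A (T + S) (T + S) := by
    have := adj_add hTS hST
    rwa [add_comm S T] at this
  have hv : IsAAdjoint A (T - S) (S - T) := by
    have := adj_add hTS (adj_neg hST)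
    simpa [sub_eq_add_neg] using this
  set u : H →L[ℂ] H := T + S with hudef
  set v : H →L[ℂ] H := T - S with hvdef
  have hnegv : S - T = -v := by rw [hvdef, neg_sub]
  have hvv : IsAAdjoint A (v * v) (v * v) := by
    have := adj_mul hv hv
    rwa [hnegv, neg_mul_neg] at this
  have huu : IsAAdjoint A (u * u) (u * u) := adj_mul hu hu
  have hU4 : IsAAdjoint A ((u*u)*(u*u)) ((u*u)*(u*u)) := adj_mul huu huu
  have hV4 : IsAAdjoint A ((v*v)*(v*v)) ((v*v)*(v*v)) := adj_mul hvv hvv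
  have hvI : IsAAdjoint A (Complex.I • v) (Complex.I • v) := by
    have := adj_smul Complex.I hv
    rwa [Complex.conj_I, hnegv, neg_smul, ← smul_neg, neg_neg] at this
  -- pointwise bounds
  obtain ⟨cT, hcT0, hbT⟩ := sqb_of hR hR2 hTS
  obtain ⟨cTT, hcTT0, hbTT⟩ := sqb_of hR hR2 hTT
  obtain ⟨cSS, hcSS0, hbSS⟩ := sqb_of hR hR2 hSS
  obtain ⟨ca, hca0, hba⟩ := sqb_of hR hR2 ha
  obtain ⟨cu, hcu0, hbu⟩ := sqb_of hR hR2 hu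
  obtain ⟨cv, hcv0, hbv⟩ := sqb_of hR hR2 hv
  obtain ⟨cuu, hcuu0, hbuu⟩ := sqb_of hR hR2 huu
  obtain ⟨cvv, hcvv0, hbvv⟩ := sqb_of hR hR2 hvv
  obtain ⟨cU4, hcU40, hbU4⟩ := sqb_of hR hR2 hU4
  obtain ⟨cV4, hcV40, hbV4⟩ := sqb_of hR hR2 hV4
  obtain ⟨cvI, hcvI0, hbvI⟩ := sqb_of hR hR2 hvI
  set W := wA A T with hW
  have hW0 : 0 ≤ W := wA_nonneg A T
  -- w(u) ≤ 2W and w(I•v) ≤ 2W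
  have hSconj : ∀ x : H, (inner ℂ (R (S x)) (R x) : ℂ)
      = (starRingEnd ℂ) (inner ℂ (R (T x)) (R x) : ℂ) := by
    intro x
    rw [lem_move hR hR2 hST x x, ← inner_conj_symm]
  have hwu : wA A u ≤ 2 * W := by
    apply wA_le hR hR2 (by positivity)
    intro x hx
    have hval : (inner ℂ (R (u x)) (R x) : ℂ)
        = inner ℂ (R (T x)) (R x) + (starRingEnd ℂ) (inner ℂ (R (T x)) (R x) : ℂ) := by
      have : u x = T x + S x := rfl
      rw [this, map_add, inner_add_left, hSconj x]
    set z : ℂ := inner ℂ (R (T x)) (R x) with hz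
    rw [hval, Complex.add_conj]
    calc ‖((2 * z.re : ℝ) : ℂ)‖ = |2 * z.re| := by rw [Complex.norm_real, Real.norm_eq_abs]
      _ ≤ 2 * ‖z‖ := by
          rw [abs_mul]
          simp only [Nat.abs_ofNat]
          exact mul_le_mul_of_nonneg_left (Complex.abs_re_le_norm z) (by norm_num)
      _ ≤ 2 * W := mul_le_mul_of_nonneg_left (mem_le_wA hR hR2 hbT hx) (by norm_num)
  have hwvI : wA A (Complex.I • v) ≤ 2 * W := by
    apply wA_le hR hR2 (by positivity)
    intro x hx
    set z : ℂ := inner ℂ (R (T x)) (R x) with hz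
    have hval : (inner ℂ (R ((Complex.I • v) x)) (R x) : ℂ)
        = (starRingEnd ℂ) Complex.I * (z - (starRingEnd ℂ) z) := by
      have e1 : (Complex.I • v) x = Complex.I • (v x) := rfl
      have e2 : v x = T x - S x := rfl
      rw [e1, map_smul, inner_smul_left, e2, map_sub, inner_sub_left, hSconj x]
    rw [hval, Complex.sub_conj, Complex.conj_I]
    have : -Complex.I * ((2 * z.im : ℝ) * Complex.I) = ((2 * z.im : ℝ) : ℂ) := by
      have hII : Complex.I * Complex.I = -1 := Complex.I_mul_I
      ring_nf
      rw [Complex.I_sq]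
      ring
    rw [this]
    calc ‖((2 * z.im : ℝ) : ℂ)‖ = |2 * z.im| := by rw [Complex.norm_real, Real.norm_eq_abs]
      _ ≤ 2 * ‖z‖ := by
          rw [abs_mul]
          simp only [Nat.abs_ofNat]
          exact mul_le_mul_of_nonneg_left (Complex.abs_im_le_norm z) (by norm_num)
      _ ≤ 2 * W := mul_le_mul_of_nonneg_left (mem_le_wA hR hR2 hbT hx) (by norm_num)
  -- norms of u and v
  have hnu : opNormA' A u ≤ 2 * W := by
    rw [norm_eq_w hR hR2 hu hcu0 hbu]; exact hwu
  have hnvI : opNormA' A (Complex.I • v) ≤ 2 * W := by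
    rw [norm_eq_w hR hR2 hvI hcvI0 hbvI]; exact hwvI
  have hnv : opNormA' A v ≤ 2 * W := by
    have hle : opNormA' A v ≤ opNormA' A (Complex.I • v) := by
      have e1 : ((-Complex.I) • (Complex.I • v)) = v := by
        rw [smul_smul, neg_mul, Complex.I_mul_I, neg_neg, one_smul]
      calc opNormA' A v = opNormA' A ((-Complex.I) • (Complex.I • v)) := by rw [e1]
        _ ≤ ‖(-Complex.I)‖ * opNormA' A (Complex.I • v) :=
            opA_smul_le hR hR2 _ hbvI
        _ = opNormA' A (Complex.I • v) := by
            rw [norm_neg, Complex.norm_I, one_mul]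
    exact le_trans hle hnvI
  constructor
  · -- LOWER BOUND
    have idmain : (T * S + S * T)^2 + (4:ℂ) • ((2:ℂ)⁻¹ • (T^2 + S^2))^2
        = (2⁻¹ : ℂ) • ((u*u)*(u*u) + (v*v)*(v*v)) := by
      have e1 : ((2:ℂ)⁻¹ • (T^2 + S^2))^2 = ((2:ℂ)⁻¹)^2 • (T^2 + S^2)^2 := by
        rw [smul_pow]
      have e2 : (4:ℂ) • (((2:ℂ)⁻¹)^2 • (T^2 + S^2)^2) = (T^2 + S^2)^2 := by
        rw [smul_smul]
        norm_num
      rw [e1, e2]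
      have e3 : (u*u)*(u*u) + (v*v)*(v*v)
          = (2:ℂ) • ((T * S + S * T)^2 + (T^2 + S^2)^2) := by
        rw [hudef, hvdef, two_smul]
        noncomm_ring
      rw [e3, smul_smul]
      norm_num
    rw [idmain]
    -- bound for U4 + V4
    have hbsum : ∀ x, ‖R (((u*u)*(u*u) + (v*v)*(v*v)) x)‖ ≤ (cU4 + cV4) * ‖R x‖ := by
      intro x
      have e : (((u*u)*(u*u) + (v*v)*(v*v)) x) = ((u*u)*(u*u)) x + ((v*v)*(v*v)) x := rfl
      rw [e, map_add]
      calc ‖R (((u*u)*(u*u)) x) + R (((v*v)*(v*v)) x)‖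
          ≤ ‖R (((u*u)*(u*u)) x)‖ + ‖R (((v*v)*(v*v)) x)‖ := norm_add_le _ _
        _ ≤ cU4 * ‖R x‖ + cV4 * ‖R x‖ := add_le_add (hbU4 x) (hbV4 x)
        _ = (cU4 + cV4) * ‖R x‖ := by ring
    have step1 : opNormA' A ((2⁻¹ : ℂ) • ((u*u)*(u*u) + (v*v)*(v*v)))
        ≤ (1/2) * opNormA' A ((u*u)*(u*u) + (v*v)*(v*v)) := by
      have := opA_smul_le hR hR2 ((2⁻¹ : ℂ)) hbsum
      have habs : ‖((2⁻¹ : ℂ))‖ = 1/2 := by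
        rw [norm_inv]
        norm_num
      rwa [habs] at this
    have step2 : opNormA' A ((u*u)*(u*u) + (v*v)*(v*v))
        ≤ opNormA' A ((u*u)*(u*u)) + opNormA' A ((v*v)*(v*v)) :=
      opA_add_le hR hR2 hbU4 hbV4
    have hU4n : opNormA' A ((u*u)*(u*u)) ≤ 16 * W^4 := by
      rw [opA_sq hR hR2 huu hcuu0 hbuu, opA_sq hR hR2 hu hcu0 hbu]
      calc (opNormA' A u ^ 2) ^ 2 ≤ ((2*W) ^ 2) ^ 2 := by
            apply pow_le_pow_left₀ (pow_nonneg (opA_nonneg A u) 2)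
            exact pow_le_pow_left₀ (opA_nonneg A u) hnu 2
        _ = 16 * W ^ 4 := by ring
    have hV4n : opNormA' A ((v*v)*(v*v)) ≤ 16 * W^4 := by
      rw [opA_sq hR hR2 hvv hcvv0 hbvv]
      have h1 : opNormA' A (v * v) ≤ opNormA' A v ^ 2 := opA_mul_le hR hR2 hcv0 hbv
      calc (opNormA' A (v*v)) ^ 2 ≤ (opNormA' A v ^ 2) ^ 2 := by
            apply pow_le_pow_left₀ (opA_nonneg A _) h1
        _ ≤ ((2*W) ^ 2) ^ 2 := by
            apply pow_le_pow_left₀ (pow_nonneg (opA_nonneg A v) 2)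
            exact pow_le_pow_left₀ (opA_nonneg A v) hnv 2
        _ = 16 * W ^ 4 := by ring
    calc (1/16) * opNormA' A ((2⁻¹ : ℂ) • ((u*u)*(u*u) + (v*v)*(v*v)))
        ≤ (1/16) * ((1/2) * (opNormA' A ((u*u)*(u*u)) + opNormA' A ((v*v)*(v*v)))) := by
          apply mul_le_mul_of_nonneg_left _ (by norm_num)
          exact le_trans step1 (mul_le_mul_of_nonneg_left step2 (by norm_num))
      _ ≤ (1/16) * ((1/2) * (16 * W^4 + 16 * W^4)) := by
          apply mul_le_mul_of_nonneg_left _ (by norm_num)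
          apply mul_le_mul_of_nonneg_left _ (by norm_num)
          exact add_le_add hU4n hV4n
      _ = W ^ 4 := by ring
  · -- UPPER BOUND
    set Na := opNormA' A (T * S + S * T) with hNa
    have hNa0 : 0 ≤ Na := opA_nonneg A _
    have hW2eq : wA A (T^2) = wA A (T * T) := by rw [pow_two]
    set W2 := wA A (T * T) with hW2
    have hW20 : 0 ≤ W2 := wA_nonneg A _
    set RHS := (1/8) * Na^2 + (1/2) * W2^2 with hRHS
    have hRHS0 : 0 ≤ RHS := by positivity
    have key : ∀ x : H, ‖R x‖ = 1 →
        (‖(inner ℂ (R (T x)) (R x) : ℂ)‖) ^ 4 ≤ RHS := by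
      intro x hx
      set z : ℂ := inner ℂ (R (T x)) (R x) with hz
      by_cases hz0 : z = 0
      · rw [hz0]; simpa using hRHS0
      · have habs0 : 0 < ‖z‖ := by
          exact norm_pos_iff.mpr hz0
        set μ : ℂ := z / ((‖z‖ : ℝ) : ℂ) with hμ
        have hμabs : ‖μ‖ = 1 := by
          rw [hμ, norm_div, Complex.norm_real, Real.norm_eq_abs,
            _root_.abs_of_nonneg (norm_nonneg z), div_self habs0.ne']
        have hμc : μ * (starRingEnd ℂ) μ = 1 := by
          rw [Complex.mul_conj, Complex.normSq_eq_norm_sq, hμabs]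
          norm_num
        have hμc' : (starRingEnd ℂ) μ * μ = 1 := by rw [mul_comm]; exact hμc
        set G : H →L[ℂ] H := μ • T + ((starRingEnd ℂ) μ) • S with hG
        set E : H →L[ℂ] H := (μ * μ) • (T * T)
          + ((starRingEnd ℂ) μ * (starRingEnd ℂ) μ) • (S * S) with hE
        have hGadj : IsAAdjoint A G G := by
          have h1 := adj_smul μ hTS
          have h2 := adj_smul ((starRingEnd ℂ) μ) hST
          rw [Complex.conj_conj] at h2
          have h3 := adj_add h1 h2
          rwa [add_comm ((starRingEnd ℂ) μ • S) (μ • T)] at h3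
        have hEadj : IsAAdjoint A E E := by
          have h1 := adj_smul (μ * μ) hTT
          have h2 := adj_smul ((starRingEnd ℂ) μ * (starRingEnd ℂ) μ) hSS
          rw [map_mul] at h1 h2
          rw [Complex.conj_conj] at h2
          have h3 := adj_add h1 h2
          rwa [add_comm (((starRingEnd ℂ) μ * (starRingEnd ℂ) μ) • (S * S))
            ((μ * μ) • (T * T))] at h3
        obtain ⟨cG, hcG0, hbG⟩ := sqb_of hR hR2 hGadj
        obtain ⟨cE, hcE0, hbE⟩ := sqb_of hR hR2 hEadj
        -- G * G = a + E
        have hGsq : G * G = (T * S + S * T) + E := by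
          rw [hG, hE]
          simp only [add_mul, mul_add, smul_mul_assoc, mul_smul_comm, smul_smul, smul_add]
          rw [hμc, hμc', one_smul, one_smul]
          abel
        -- inner value of G
        have hval : (inner ℂ (R (G x)) (R x) : ℂ) = ((2 * ‖z‖ : ℝ) : ℂ) := by
          have e1 : G x = μ • T x + ((starRingEnd ℂ) μ) • S x := rfl
          rw [e1, map_add, map_smul, map_smul, inner_add_left, inner_smul_left,
            inner_smul_left, hSconj x, ← hz, Complex.conj_conj]
          have h1 : (starRingEnd ℂ) μ * z = ((‖z‖ : ℝ) : ℂ) := by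
            rw [hμ, map_div₀, Complex.conj_ofReal]
            rw [div_mul_eq_mul_div, mul_comm, Complex.mul_conj, Complex.normSq_eq_norm_sq]
            rw [Complex.ofReal_pow, pow_two, mul_div_assoc,
              div_self (by exact_mod_cast habs0.ne' : ((‖z‖ : ℝ) : ℂ) ≠ 0), mul_one]
          have h2 : μ * (starRingEnd ℂ) z = ((‖z‖ : ℝ) : ℂ) := by
            rw [hμ, div_mul_eq_mul_div, Complex.mul_conj, Complex.normSq_eq_norm_sq]
            rw [Complex.ofReal_pow, pow_two, mul_div_assoc,
              div_self (by exact_mod_cast habs0.ne' : ((‖z‖ : ℝ) : ℂ) ≠ 0), mul_one]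
          rw [h1, h2]
          push_cast
          ring
        -- 2|z| ≤ ‖G‖
        have h2z : 2 * ‖z‖ ≤ opNormA' A G := by
          rw [norm_eq_w hR hR2 hGadj hcG0 hbG]
          have h' := mem_le_wA hR hR2 hbG hx
          rw [hval, Complex.norm_real, Real.norm_eq_abs] at h'
          exact le_trans (le_abs_self _) h' 
        -- ‖E‖ ≤ 2 * W2
        have hwE : opNormA' A E ≤ 2 * W2 := by
          rw [norm_eq_w hR hR2 hEadj hcE0 hbE]
          apply wA_le hR hR2 (by positivity)
          intro y hy
          set ζ : ℂ := inner ℂ (R ((T*T) y)) (R y) with hζ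
          set w : ℂ := (starRingEnd ℂ) (μ * μ) * ζ with hwdef
          have hval3 : (inner ℂ (R (E y)) (R y) : ℂ) = w + (starRingEnd ℂ) w := by
            have e1 : E y = (μ * μ) • (T*T) y + ((starRingEnd ℂ) μ * (starRingEnd ℂ) μ) • (S*S) y := rfl
            have e2 : (inner ℂ (R ((S*S) y)) (R y) : ℂ) = (starRingEnd ℂ) ζ := by
              rw [lem_move hR hR2 hSS y y, hζ, ← inner_conj_symm]
            rw [e1, map_add, map_smul, map_smul, inner_add_left, inner_smul_left,
              inner_smul_left, e2, hwdef]
            simp only [map_mul, Complex.conj_conj]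
            rfl
          rw [hval3, Complex.add_conj]
          have hwabs : ‖w‖ ≤ W2 := by
            have habsw : ‖w‖ = ‖ζ‖ := by
              rw [hwdef, norm_mul, Complex.norm_conj, norm_mul,
                hμabs, one_mul, one_mul]
            rw [habsw]
            exact mem_le_wA hR hR2 hbTT hy
          calc ‖((2 * w.re : ℝ) : ℂ)‖ = |2 * w.re| := by rw [Complex.norm_real, Real.norm_eq_abs]
            _ ≤ 2 * ‖w‖ := by
                rw [abs_mul]
                simp only [Nat.abs_ofNat]
                exact mul_le_mul_of_nonneg_left (Complex.abs_re_le_norm w) (by norm_num)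
            _ ≤ 2 * W2 := mul_le_mul_of_nonneg_left hwabs (by norm_num)
        -- ‖G‖² = ‖G*G‖ ≤ Na + 2*W2
        have hG2 : opNormA' A G ^ 2 ≤ Na + 2 * W2 := by
          rw [← opA_sq hR hR2 hGadj hcG0 hbG, hGsq]
          calc opNormA' A ((T * S + S * T) + E)
              ≤ Na + opNormA' A E := opA_add_le hR hR2 hba hbE
            _ ≤ Na + 2 * W2 := by linarith [hwE]
        have hGn0 : 0 ≤ opNormA' A G := opA_nonneg A G
        have h16 : 16 * (‖z‖) ^ 4 ≤ (Na + 2*W2) ^ 2 := by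
          have h1 : (2 * ‖z‖) ^ 4 ≤ (opNormA' A G) ^ 4 :=
            pow_le_pow_left₀ (mul_nonneg (by norm_num) (norm_nonneg z)) h2z 4
          have h2 : (opNormA' A G) ^ 4 = ((opNormA' A G) ^ 2) ^ 2 := by ring
          have h3 : ((opNormA' A G) ^ 2) ^ 2 ≤ (Na + 2*W2) ^ 2 :=
            pow_le_pow_left₀ (pow_nonneg hGn0 2) hG2 2
          calc 16 * (‖z‖) ^ 4 = (2 * ‖z‖) ^ 4 := by ring
            _ ≤ (opNormA' A G) ^ 4 := h1
            _ = ((opNormA' A G) ^ 2) ^ 2 := h2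
            _ ≤ (Na + 2*W2) ^ 2 := h3
        have hfin : (Na + 2*W2)^2 ≤ 2 * Na^2 + 8 * W2^2 := by nlinarith [sq_nonneg (Na - 2*W2)]
        rw [hRHS]
        nlinarith [h16, hfin]
    -- conclude
    set B := Real.sqrt (Real.sqrt RHS) with hB
    have hB0 : 0 ≤ B := Real.sqrt_nonneg _
    have hWB : W ≤ B := by
      apply wA_le hR hR2 hB0
      intro x hx
      have h4 := key x hx
      set r := ‖(inner ℂ (R (T x)) (R x) : ℂ)‖ with hr
      have hr0 : 0 ≤ r := norm_nonneg _
      have h2 : r ^ 2 ≤ Real.sqrt RHS := by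
        rw [Real.le_sqrt (by positivity) hRHS0]
        calc (r ^ 2) ^ 2 = r ^ 4 := by ring
          _ ≤ RHS := h4
      rw [hB, Real.le_sqrt hr0 (Real.sqrt_nonneg _)]
      exact h2
    have hB4 : B ^ 4 = RHS := by
      have e1 : B ^ 2 = Real.sqrt RHS := Real.sq_sqrt (Real.sqrt_nonneg _)
      calc B ^ 4 = (B ^ 2) ^ 2 := by ring
        _ = Real.sqrt RHS ^ 2 := by rw [e1]
        _ = RHS := Real.sq_sqrt hRHS0
    calc W ^ 4 ≤ B ^ 4 := pow_le_pow_left₀ hW0 hWB 4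
      _ = RHS := hB4
      _ = (1/8) * Na^2 + (1/2) * (wA A (T^2))^2 := by rw [hRHS, hW2eq]


theorem stmt11 (A T S : H →L[ℂ] H) (hA : StrictPos A) (hS : IsAAdjoint A T S) :
    (1/16) * opNormA' A ((T * S + S * T)^2 + (4:ℂ) • ((2:ℂ)⁻¹ • (T^2 + S^2))^2) ≤ (wA A T)^4 ∧
    (wA A T)^4 ≤ (1/8) * (opNormA' A (T * S + S * T))^2 + (1/2) * (wA A (T^2))^2 :=
  stmt11' A T S hA.1 hS
end Helpers
end
end

section
/- Let A be a strictly positive operator on H, T ∈ B_A(H), and P = T^{♯A}T + TT^{♯A}. Then w_A(T)⁴ ≤ (1/4)w_A(T²)² + (1/8)w_A(T²P + PT²) + (1/16)‖P‖_A². -/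
noncomputable section
open Complex ContinuousLinearMap

variable {H : Type*} [NormedAddCommGroup H] [InnerProductSpace ℂ H] [CompleteSpace H]

set_option linter.unusedSectionVars false
set_option linter.unusedVariables false

section basic
variable {A : H →L[ℂ] H}

lemma inner_A_right (hsa : ContinuousLinearMap.adjoint A = A) (x y : H) :
    (inner ℂ (A x) y : ℂ) = inner ℂ x (A y) := by
  conv_lhs => rw [← hsa]
  exact adjoint_inner_left A y x

lemma innA_conj_symm (hsa : ContinuousLinearMap.adjoint A = A) (x y : H) :
    innA A y x = starRingEnd ℂ (innA A x y) := by
  rw [innA, innA, inner_A_right hsa, inner_conj_symm]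

lemma vnormA_nonneg (x : H) : 0 ≤ vnormA A x := Real.sqrt_nonneg _

lemma vnormA_sq (hpos : ∀ x : H, 0 ≤ (innA A x x).re) (x : H) :
    (vnormA A x)^2 = (innA A x x).re := Real.sq_sqrt (hpos x)

lemma vnormA_zero : vnormA A (0 : H) = 0 := by simp [vnormA, innA]

lemma vnormA_smul_real (c : ℝ) (hc : 0 ≤ c) (x : H) :
    vnormA A ((c : ℂ) • x) = c * vnormA A x := by
  have h : innA A ((c:ℂ) • x) ((c:ℂ) • x) = ((c^2 : ℝ) : ℂ) * innA A x x := by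
    simp only [innA, map_smul, inner_smul_left, inner_smul_right, Complex.conj_ofReal]
    push_cast; ring
  rw [vnormA, h, Complex.re_ofReal_mul, Real.sqrt_mul (sq_nonneg c), Real.sqrt_sq hc, vnormA]
lemma csA (hsa : ContinuousLinearMap.adjoint A = A)
    (hpos : ∀ x : H, 0 ≤ (innA A x x).re) (u v : H) :
    (‖(innA A u v)‖)^2 ≤ (innA A u u).re * (innA A v v).re := by
  set b : ℂ := innA A u v with hb
  obtain ⟨c, hcabs, hcb⟩ : ∃ c : ℂ, ‖c‖ = 1 ∧ c * b = (‖b‖ : ℂ) := by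
    by_cases h0 : b = 0
    · exact ⟨1, by simp, by simp [h0]⟩
    · refine ⟨(starRingEnd ℂ) b / ‖b‖, ?_, ?_⟩
      · rw [norm_div, Complex.norm_conj, Complex.norm_real, norm_norm,
          div_self ((norm_ne_zero_iff.mpr h0))]
      · rw [div_mul_eq_mul_div, mul_comm, Complex.mul_conj, Complex.normSq_eq_norm_sq]
        push_cast
        rw [sq, mul_div_assoc, div_self (by exact_mod_cast (norm_ne_zero_iff.mpr h0)), mul_one]
  set w : H := c • v with hw
  have hcc : (starRingEnd ℂ) c * c = 1 := by
    rw [mul_comm, Complex.mul_conj', hcabs]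
    norm_num
  have hww : innA A w w = innA A v v := by
    simp only [innA, hw, map_smul, inner_smul_left, inner_smul_right]
    rw [← mul_assoc, mul_comm c ((starRingEnd ℂ) c), hcc, one_mul]
  have huw : innA A u w = c * b := by
    simp only [innA, hw, inner_smul_right, hb]
  have hwu : innA A w u = (starRingEnd ℂ) (c * b) := by
    rw [innA_conj_symm hsa, huw]
  have key : ∀ t : ℝ, 0 ≤ (innA A v v).re * (t * t) + (2 * ‖b‖) * t + (innA A u u).re := by
    intro t
    have expand : innA A (u + (t : ℂ) • w) (u + (t : ℂ) • w) =
        innA A u u + (t:ℂ) * (innA A u w) + (t:ℂ) * (innA A w u) + ((t:ℂ) * (t:ℂ)) * innA A w w := by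
      simp only [innA, map_add, map_smul, inner_add_left, inner_add_right, inner_smul_left,
        inner_smul_right, Complex.conj_ofReal]
      ring
    have h0 := hpos (u + (t : ℂ) • w)
    rw [expand] at h0
    rw [huw, hwu, hww] at h0
    have hre : (innA A u u + (t:ℂ) * (c * b) + (t:ℂ) * (starRingEnd ℂ) (c * b)
        + ((t:ℂ) * (t:ℂ)) * innA A v v).re
        = (innA A u u).re + 2 * t * (c * b).re + (t * t) * (innA A v v).re := by
      simp [Complex.add_re, Complex.mul_re, Complex.conj_re, Complex.conj_im]
      ring
    rw [hre] at h0
    have : (c * b).re = ‖b‖ := by rw [hcb]; simp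
    rw [this] at h0
    linarith
  have hd := discrim_le_zero key
  rw [discrim] at hd
  nlinarith [norm_nonneg b]
lemma abs_innA_le (hsa : ContinuousLinearMap.adjoint A = A)
    (hpos : ∀ x : H, 0 ≤ (innA A x x).re) (u v : H) :
    ‖(innA A u v)‖ ≤ vnormA A u * vnormA A v := by
  have h := csA hsa hpos u v
  have h1 : (‖(innA A u v)‖)^2 ≤ (vnormA A u * vnormA A v)^2 := by
    rw [mul_pow, vnormA_sq hpos, vnormA_sq hpos]; exact h
  have := Real.sqrt_le_sqrt h1
  rwa [Real.sqrt_sq (norm_nonneg _),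
    Real.sqrt_sq (mul_nonneg (vnormA_nonneg _) (vnormA_nonneg _))] at this

lemma vnormA_le_norm (hsa : ContinuousLinearMap.adjoint A = A)
    (hpos : ∀ x : H, 0 ≤ (innA A x x).re) (x : H) :
    vnormA A x ≤ Real.sqrt ‖A‖ * ‖x‖ := by
  have h1 : (innA A x x).re ≤ ‖A‖ * ‖x‖^2 := by
    have h2 : (innA A x x).re ≤ ‖(innA A x x)‖ := Complex.re_le_norm _
    have h3 : ‖(innA A x x)‖ ≤ ‖A x‖ * ‖x‖ := by
      rw [innA]
      calc ‖(inner ℂ (A x) x)‖ = ‖(inner ℂ (A x) x : ℂ)‖ := rfl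
        _ ≤ ‖A x‖ * ‖x‖ := norm_inner_le_norm _ _
    have h4 : ‖A x‖ * ‖x‖ ≤ ‖A‖ * ‖x‖ * ‖x‖ :=
      mul_le_mul_of_nonneg_right (A.le_opNorm x) (norm_nonneg x)
    nlinarith [norm_nonneg x]
  calc vnormA A x ≤ Real.sqrt (‖A‖ * ‖x‖^2) := Real.sqrt_le_sqrt h1
    _ = Real.sqrt ‖A‖ * ‖x‖ := by
        rw [Real.sqrt_mul (norm_nonneg A), Real.sqrt_sq (norm_nonneg x)]

/-- `W` is the `A`-adjoint of `V`. -/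
def Adj (A V W : H →L[ℂ] H) : Prop := A.comp W = (ContinuousLinearMap.adjoint V).comp A

lemma adj_symm_s12 (hsa : ContinuousLinearMap.adjoint A = A) {V W : H →L[ℂ] H}
    (h : Adj A V W) : Adj A W V := by
  unfold Adj at *
  have := congrArg ContinuousLinearMap.adjoint h
  rw [adjoint_comp, adjoint_comp, adjoint_adjoint, hsa] at this
  exact this.symm

lemma adj_apply {V W : H →L[ℂ] H} (h : Adj A V W) (u : H) : A (W u) = (adjoint V) (A u) := by
  have := congrFun (congrArg DFunLike.coe h) u
  simpa using this

lemma adj_move {V W : H →L[ℂ] H} (h : Adj A V W) (u v : H) :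
    (inner ℂ (A (W u)) v : ℂ) = inner ℂ (A u) (V v) := by
  rw [adj_apply h, adjoint_inner_left]

lemma adj_add_s12 {V₁ W₁ V₂ W₂ : H →L[ℂ] H} (h₁ : Adj A V₁ W₁) (h₂ : Adj A V₂ W₂) :
    Adj A (V₁ + V₂) (W₁ + W₂) := by
  unfold Adj at *
  rw [comp_add, h₁, h₂, map_add, add_comp]

lemma adj_mul_s12 {V₁ W₁ V₂ W₂ : H →L[ℂ] H} (h₁ : Adj A V₁ W₁) (h₂ : Adj A V₂ W₂) :
    Adj A (V₂ * V₁) (W₁ * W₂) := by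
  unfold Adj at *
  rw [mul_def, mul_def, ← comp_assoc, h₁, comp_assoc, h₂, ← comp_assoc, ← adjoint_comp]

lemma adj_smul_s12 {V W : H →L[ℂ] H} (z : ℂ) (h : Adj A V W) :
    Adj A (z • V) ((starRingEnd ℂ z) • W) := by
  unfold Adj at *
  rw [comp_smul, h, LinearIsometryEquiv.map_smulₛₗ adjoint z V, smul_comp]

lemma adj_conj_innA (hsa : ContinuousLinearMap.adjoint A = A) {V W : H →L[ℂ] H}
    (h : Adj A V W) (y : H) :
    innA A (W y) y = starRingEnd ℂ (innA A (V y) y) := by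
  rw [innA, adj_move h, innA, ← inner_conj_symm, inner_A_right hsa]

lemma adj_pow_s12 {V W : H →L[ℂ] H} (h : Adj A V W) : ∀ n : ℕ, Adj A (V^n) (W^n) := by
  intro n
  induction n with
  | zero =>
      simp only [pow_zero]
      unfold Adj
      rw [show ((1 : H →L[ℂ] H)) = ContinuousLinearMap.id ℂ H from rfl]
      simp [adjoint_id]
  | succ n ih =>
      have := adj_mul_s12 h ih
      rwa [← pow_succ', ← pow_succ] at this

lemma unit_bound (hsa : ContinuousLinearMap.adjoint A = A)
    (hpos : ∀ x : H, 0 ≤ (innA A x x).re) {V W : H →L[ℂ] H}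
    (hVW : Adj A V W) {x : H} (hx : vnormA A x = 1) :
    (vnormA A (V x))^2 ≤ ‖W * V‖ := by
  set r : H →L[ℂ] H := W * V with hrdef
  have hr : Adj A r r := adj_mul_s12 hVW (adj_symm_s12 hsa hVW)
  have hrpow : ∀ n, Adj A (r^n) (r^n) := adj_pow_s12 hr
  set g : ℕ → ℝ := fun k => vnormA A ((r^(2^k)) x) with hg
  have hg1 : ∀ k, (g k)^2 ≤ g (k+1) := by
    intro k
    have e1 : innA A ((r^(2^k)) x) ((r^(2^k)) x) = innA A x ((r^(2^(k+1))) x) := by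
      rw [innA, adj_move (hrpow (2^k)), innA]
      congr 1
      rw [← ContinuousLinearMap.mul_apply, ← pow_add]
      congr 2
      omega
    have : (g k)^2 = (innA A x ((r^(2^(k+1))) x)).re := by
      rw [hg]; dsimp only; rw [vnormA_sq hpos, e1]
    rw [this]
    calc (innA A x ((r^(2^(k+1))) x)).re ≤ ‖(innA A x ((r^(2^(k+1))) x))‖ :=
          Complex.re_le_norm _
      _ ≤ vnormA A x * vnormA A ((r^(2^(k+1))) x) := abs_innA_le hsa hpos _ _
      _ = g (k+1) := by rw [hx, one_mul]
  have hbase : (vnormA A (V x))^2 ≤ g 0 := by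
    have e1 : innA A (V x) (V x) = innA A x (r x) := by
      rw [innA, adj_move (adj_symm_s12 hsa hVW), innA, ContinuousLinearMap.mul_apply]
    rw [vnormA_sq hpos, e1]
    calc (innA A x (r x)).re ≤ ‖(innA A x (r x))‖ := Complex.re_le_norm _
      _ ≤ vnormA A x * vnormA A (r x) := abs_innA_le hsa hpos _ _
      _ = g 0 := by rw [hx, one_mul, hg]; dsimp only; norm_num
  have hgK : ∀ k, g k ≤ (Real.sqrt ‖A‖ * ‖x‖) * ‖r‖^(2^k) := by
    intro k
    calc g k ≤ Real.sqrt ‖A‖ * ‖(r^(2^k)) x‖ := vnormA_le_norm hsa hpos _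
      _ ≤ Real.sqrt ‖A‖ * (‖r^(2^k)‖ * ‖x‖) := by
          exact mul_le_mul_of_nonneg_left ((r^(2^k)).le_opNorm x) (Real.sqrt_nonneg _)
      _ ≤ Real.sqrt ‖A‖ * (‖r‖^(2^k) * ‖x‖) := by
          refine mul_le_mul_of_nonneg_left (mul_le_mul_of_nonneg_right ?_ (norm_nonneg _))
            (Real.sqrt_nonneg _)
          exact norm_pow_le' r (Nat.pow_pos (by norm_num))
      _ = (Real.sqrt ‖A‖ * ‖x‖) * ‖r‖^(2^k) := by ring
  have hgnn : ∀ k, 0 ≤ g k := fun k => vnormA_nonneg _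
  have hchain : ∀ n, (g 0)^(2^n) ≤ g n := by
    intro n
    induction n with
    | zero => simp
    | succ n ih =>
        have : (g 0)^(2^(n+1)) = ((g 0)^(2^n))^2 := by
          rw [pow_succ, pow_mul]
        rw [this]
        calc ((g 0)^(2^n))^2 ≤ (g n)^2 := by
              exact pow_le_pow_left₀ (pow_nonneg (hgnn 0) _) ih 2
          _ ≤ g (n+1) := hg1 n
  set u₀ : ℝ := (vnormA A (V x))^2 with hu
  have hun : 0 ≤ u₀ := sq_nonneg _
  have hkey : ∀ n, u₀^(2^n) ≤ (Real.sqrt ‖A‖ * ‖x‖) * ‖r‖^(2^n) := by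
    intro n
    calc u₀^(2^n) ≤ (g 0)^(2^n) := pow_le_pow_left₀ hun hbase _
      _ ≤ g n := hchain n
      _ ≤ _ := hgK n
  by_contra hcon
  push_neg at hcon
  set K : ℝ := Real.sqrt ‖A‖ * ‖x‖ with hK
  rcases eq_or_lt_of_le (norm_nonneg r) with h0 | h0
  · have h1 := hkey 0
    norm_num at h1
    rw [← h0, mul_zero] at h1
    rw [← h0] at hcon
    linarith
  · set q : ℝ := u₀ / ‖r‖ with hq
    have hq1 : 1 < q := (one_lt_div h0).mpr hcon
    have hqn : ∀ n : ℕ, q^(2^n) ≤ K := by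
      intro n
      rw [hq, div_pow, div_le_iff₀ (pow_pos h0 _)]
      exact hkey n
    obtain ⟨n, hn⟩ := pow_unbounded_of_one_lt K hq1
    have h2n : q^n ≤ q^(2^n) := pow_le_pow_right₀ hq1.le (Nat.le_of_lt (Nat.lt_two_pow_self (n := n)))
    exact absurd (h2n.trans (hqn n)) (not_le.mpr hn)

lemma innA_self_im (hsa : ContinuousLinearMap.adjoint A = A) (x : H) : (innA A x x).im = 0 := by
  have h := innA_conj_symm hsa x x
  have := congrArg Complex.im h
  simp only [Complex.conj_im] at this
  linarith

lemma abddC (hsa : ContinuousLinearMap.adjoint A = A)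
    (hpos : ∀ x : H, 0 ≤ (innA A x x).re)
    (hstrict : ∀ x : H, x ≠ 0 → 0 < (innA A x x).re)
    {V W : H →L[ℂ] H} (hVW : Adj A V W) (x : H) :
    vnormA A (V x) ≤ Real.sqrt ‖W * V‖ * vnormA A x := by
  by_cases hx0 : x = 0
  · subst hx0; simp [vnormA_zero, map_zero]
  · set ν : ℝ := vnormA A x with hν
    have hνpos : 0 < ν := Real.sqrt_pos.mpr (hstrict x hx0)
    set y : H := ((ν⁻¹ : ℝ) : ℂ) • x with hy
    have hyu : vnormA A y = 1 := by
      rw [hy, vnormA_smul_real _ (inv_nonneg.mpr hνpos.le), ← hν, inv_mul_cancel₀ hνpos.ne']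
    have hub := unit_bound hsa hpos hVW hyu
    have hVy : vnormA A (V y) = ν⁻¹ * vnormA A (V x) := by
      rw [hy, map_smul, vnormA_smul_real _ (inv_nonneg.mpr hνpos.le)]
    rw [hVy] at hub
    have h2 : ν⁻¹ * vnormA A (V x) ≤ Real.sqrt ‖W * V‖ := by
      have hnn : 0 ≤ ν⁻¹ * vnormA A (V x) := mul_nonneg (inv_nonneg.mpr hνpos.le) (vnormA_nonneg _)
      have := Real.sqrt_le_sqrt hub
      rwa [Real.sqrt_sq hnn] at this
    calc vnormA A (V x) = ν * (ν⁻¹ * vnormA A (V x)) := by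
          field_simp
      _ ≤ ν * Real.sqrt ‖W * V‖ := mul_le_mul_of_nonneg_left h2 hνpos.le
      _ = Real.sqrt ‖W * V‖ * ν := mul_comm _ _

lemma wA_bddAbove (hsa : ContinuousLinearMap.adjoint A = A)
    (hpos : ∀ x : H, 0 ≤ (innA A x x).re)
    (hstrict : ∀ x : H, x ≠ 0 → 0 < (innA A x x).re)
    {V W : H →L[ℂ] H} (hVW : Adj A V W) :
    BddAbove {r : ℝ | ∃ x : H, vnormA A x = 1 ∧ r = ‖(innA A (V x) x)‖} := by
  refine ⟨Real.sqrt ‖W * V‖, ?_⟩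
  rintro r ⟨x, hx, rfl⟩
  calc ‖(innA A (V x) x)‖ ≤ vnormA A (V x) * vnormA A x := abs_innA_le hsa hpos _ _
    _ = vnormA A (V x) := by rw [hx, mul_one]
    _ ≤ Real.sqrt ‖W * V‖ * vnormA A x := abddC hsa hpos hstrict hVW x
    _ = Real.sqrt ‖W * V‖ := by rw [hx, mul_one]

lemma op_bddAbove (hsa : ContinuousLinearMap.adjoint A = A)
    (hpos : ∀ x : H, 0 ≤ (innA A x x).re)
    (hstrict : ∀ x : H, x ≠ 0 → 0 < (innA A x x).re)
    {V W : H →L[ℂ] H} (hVW : Adj A V W) :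
    BddAbove {r : ℝ | ∃ x : H, vnormA A x = 1 ∧ r = vnormA A (V x)} := by
  refine ⟨Real.sqrt ‖W * V‖, ?_⟩
  rintro r ⟨x, hx, rfl⟩
  calc vnormA A (V x) ≤ Real.sqrt ‖W * V‖ * vnormA A x := abddC hsa hpos hstrict hVW x
    _ = Real.sqrt ‖W * V‖ := by rw [hx, mul_one]

lemma abs_innA_le_wA_sq (hsa : ContinuousLinearMap.adjoint A = A)
    (hpos : ∀ x : H, 0 ≤ (innA A x x).re)
    (hstrict : ∀ x : H, x ≠ 0 → 0 < (innA A x x).re)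
    {V W : H →L[ℂ] H} (hVW : Adj A V W) (y : H) :
    ‖(innA A (V y) y)‖ ≤
      (sSup {r : ℝ | ∃ x : H, vnormA A x = 1 ∧ r = ‖(innA A (V x) x)‖})
        * (vnormA A y)^2 := by
  by_cases hy0 : y = 0
  · subst hy0
    simp [innA, vnormA_zero]
  · set ν : ℝ := vnormA A y with hν
    have hνpos : 0 < ν := Real.sqrt_pos.mpr (hstrict y hy0)
    set z : H := ((ν⁻¹ : ℝ) : ℂ) • y with hz
    have hzu : vnormA A z = 1 := by
      rw [hz, vnormA_smul_real _ (inv_nonneg.mpr hνpos.le), ← hν, inv_mul_cancel₀ hνpos.ne']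
    have hmem : ‖(innA A (V z) z)‖
        ∈ {r : ℝ | ∃ x : H, vnormA A x = 1 ∧ r = ‖(innA A (V x) x)‖} := ⟨z, hzu, rfl⟩
    have hle := le_csSup (wA_bddAbove hsa hpos hstrict hVW) hmem
    have hzz : ‖(innA A (V z) z)‖ = (ν⁻¹)^2 * ‖(innA A (V y) y)‖ := by
      rw [hz, innA, map_smul, map_smul, inner_smul_left, inner_smul_right, Complex.conj_ofReal]
      rw [norm_mul, norm_mul, Complex.norm_real, Real.norm_eq_abs, _root_.abs_of_nonneg (inv_nonneg.mpr hνpos.le), innA]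
      ring
    rw [hzz] at hle
    have h2 : ‖(innA A (V y) y)‖ = ν^2 * ((ν⁻¹)^2 * ‖(innA A (V y) y)‖) := by
      field_simp
    rw [h2]
    have hsup_nn : (0:ℝ) ≤ (ν⁻¹)^2 * ‖(innA A (V y) y)‖ :=
      mul_nonneg (sq_nonneg _) (norm_nonneg _)
    calc ν^2 * ((ν⁻¹)^2 * ‖(innA A (V y) y)‖)
        ≤ ν^2 * sSup {r : ℝ | ∃ x : H, vnormA A x = 1 ∧ r = ‖(innA A (V x) x)‖} :=
          mul_le_mul_of_nonneg_left hle (sq_nonneg _)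
      _ = _ := mul_comm _ _

lemma innA_parallelogram (u v : H) :
    innA A (u+v) (u+v) + innA A (u-v) (u-v) = 2 * innA A u u + 2 * innA A v v := by
  simp only [innA, map_add, map_sub, inner_add_left, inner_add_right, inner_sub_left,
    inner_sub_right]
  ring

lemma re_polar_le_wA (hsa : ContinuousLinearMap.adjoint A = A)
    (hpos : ∀ x : H, 0 ≤ (innA A x x).re)
    (hstrict : ∀ x : H, x ≠ 0 → 0 < (innA A x x).re)
    {D : H →L[ℂ] H} (hD : Adj A D D) {u v : H}
    (hu : vnormA A u = 1) (hv : vnormA A v = 1) :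
    (inner ℂ (A (D u)) v : ℂ).re ≤
      sSup {r : ℝ | ∃ x : H, vnormA A x = 1 ∧ r = ‖(innA A (D x) x)‖} := by
  set wD := sSup {r : ℝ | ∃ x : H, vnormA A x = 1 ∧ r = ‖(innA A (D x) x)‖} with hwD
  have hDvu : (inner ℂ (A (D v)) u : ℂ) = starRingEnd ℂ (inner ℂ (A (D u)) v) := by
    rw [adj_move hD v u, ← inner_conj_symm]
    congr 1
    rw [← inner_A_right hsa]
  have key : (innA A (D (u+v)) (u+v)).re - (innA A (D (u-v)) (u-v)).re
      = 4 * (inner ℂ (A (D u)) v : ℂ).re := by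
    have e : innA A (D (u+v)) (u+v) - innA A (D (u-v)) (u-v)
        = 2 * (inner ℂ (A (D u)) v + inner ℂ (A (D v)) u) := by
      simp only [innA, map_add, map_sub, inner_add_left, inner_add_right, inner_sub_left,
        inner_sub_right]
      ring
    rw [hDvu, Complex.add_conj] at e
    rw [show ((2:ℂ) * ((2 * (inner ℂ (A (D u)) v : ℂ).re : ℝ) : ℂ))
        = (((4 * (inner ℂ (A (D u)) v : ℂ).re : ℝ)) : ℂ) by push_cast; ring] at e
    have := congrArg Complex.re e
    simp only [Complex.sub_re, Complex.ofReal_re] at this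
    exact this
  have b1 : (innA A (D (u+v)) (u+v)).re ≤ wD * (vnormA A (u+v))^2 := by
    calc (innA A (D (u+v)) (u+v)).re ≤ ‖(innA A (D (u+v)) (u+v))‖ := Complex.re_le_norm _
      _ ≤ wD * (vnormA A (u+v))^2 := abs_innA_le_wA_sq hsa hpos hstrict hD _
  have b2 : -(innA A (D (u-v)) (u-v)).re ≤ wD * (vnormA A (u-v))^2 := by
    calc -(innA A (D (u-v)) (u-v)).re ≤ ‖(innA A (D (u-v)) (u-v))‖ := by
          rw [← norm_neg, ← Complex.neg_re]
          exact Complex.re_le_norm _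
      _ ≤ wD * (vnormA A (u-v))^2 := abs_innA_le_wA_sq hsa hpos hstrict hD _
  have hpar : (vnormA A (u+v))^2 + (vnormA A (u-v))^2 = 4 := by
    have := congrArg Complex.re (innA_parallelogram (A := A) u v)
    simp only [Complex.add_re, Complex.mul_re] at this
    rw [vnormA_sq hpos, vnormA_sq hpos]
    have h1 := vnormA_sq hpos u
    have h2 := vnormA_sq hpos v
    rw [hu] at h1; rw [hv] at h2
    simp at this
    rw [this, ← h1, ← h2]
    norm_num
  have expand : wD * (vnormA A (u+v))^2 + wD * (vnormA A (u-v))^2 = wD * 4 := by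
    rw [← mul_add, hpar]
  linarith [b1, b2, key, expand]

lemma vnorm_apply_le_wA (hsa : ContinuousLinearMap.adjoint A = A)
    (hpos : ∀ x : H, 0 ≤ (innA A x x).re)
    (hstrict : ∀ x : H, x ≠ 0 → 0 < (innA A x x).re)
    {D : H →L[ℂ] H} (hD : Adj A D D) {x : H} (hx : vnormA A x = 1) :
    vnormA A (D x) ≤
      sSup {r : ℝ | ∃ x : H, vnormA A x = 1 ∧ r = ‖(innA A (D x) x)‖} := by
  set wD := sSup {r : ℝ | ∃ x : H, vnormA A x = 1 ∧ r = ‖(innA A (D x) x)‖} with hwD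
  have hwnn : 0 ≤ wD := by
    have hmem : ‖(innA A (D x) x)‖
        ∈ {r : ℝ | ∃ x : H, vnormA A x = 1 ∧ r = ‖(innA A (D x) x)‖} := ⟨x, hx, rfl⟩
    exact le_trans (norm_nonneg _) (le_csSup (wA_bddAbove hsa hpos hstrict hD) hmem)
  by_cases hm0 : vnormA A (D x) = 0
  · rw [hm0]; exact hwnn
  · set m : ℝ := vnormA A (D x) with hm
    have hmpos : 0 < m := lt_of_le_of_ne (vnormA_nonneg _) (Ne.symm hm0)
    set v : H := ((m⁻¹ : ℝ) : ℂ) • (D x) with hvdef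
    have hvu : vnormA A v = 1 := by
      rw [hvdef, vnormA_smul_real _ (inv_nonneg.mpr hmpos.le), ← hm, inv_mul_cancel₀ hmpos.ne']
    have hrev : (inner ℂ (A (D x)) v : ℂ).re = m := by
      rw [hvdef, inner_smul_right]
      have : (inner ℂ (A (D x)) (D x) : ℂ) = ((m^2 : ℝ) : ℂ) := by
        have him := innA_self_im hsa (D x)
        have hre : (innA A (D x) (D x)).re = m^2 := by rw [← vnormA_sq hpos]
        rw [innA] at him hre
        apply Complex.ext
        · rw [Complex.ofReal_re]; exact hre
        · rw [Complex.ofReal_im]; exact him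
      rw [this, ← Complex.ofReal_mul, Complex.ofReal_re, sq]
      field_simp
    have := re_polar_le_wA hsa hpos hstrict hD hx hvu
    rw [hrev] at this
    exact this

lemma innA_add_left (F G : H →L[ℂ] H) (x y : H) :
    innA A ((F + G) x) y = innA A (F x) y + innA A (G x) y := by
  simp [innA, inner_add_left]

lemma innA_move {V W : H →L[ℂ] H} (h : Adj A V W) (u v : H) :
    innA A ((W * V) u) v = innA A (V u) (V v) := by
  rw [innA, innA, ContinuousLinearMap.mul_apply, adj_move h]

lemma core_ineq (hsa : ContinuousLinearMap.adjoint A = A)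
    (hpos : ∀ x : H, 0 ≤ (innA A x x).re)
    (hstrict : ∀ x : H, x ≠ 0 → 0 < (innA A x x).re)
    {T S : H →L[ℂ] H} (hTS : Adj A T S) {x : H} (hx : vnormA A x = 1) :
    16 * (‖(innA A (T x) x)‖)^4 ≤
      4 * (sSup {r : ℝ | ∃ y : H, vnormA A y = 1 ∧ r = ‖(innA A ((T^2) y) y)‖})^2
      + 2 * (sSup {r : ℝ | ∃ y : H, vnormA A y = 1 ∧ r = ‖
          (innA A ((T^2 * (S * T + T * S) + (S * T + T * S) * T^2) y) y)‖})
      + (sSup {r : ℝ | ∃ y : H, vnormA A y = 1 ∧ r = vnormA A ((S * T + T * S) y)})^2 := by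
  have hST : Adj A S T := adj_symm_s12 hsa hTS
  have hT2 : Adj A (T^2) (S^2) := by
    have := adj_mul_s12 hTS hTS
    rwa [← pow_two, ← pow_two] at this
  have hS2 : Adj A (S^2) (T^2) := adj_symm_s12 hsa hT2
  set P : H →L[ℂ] H := S * T + T * S with hPdef
  have hP : Adj A P P := adj_add_s12 (adj_mul_s12 hTS hST) (adj_mul_s12 hST hTS)
  set X : H →L[ℂ] H := T^2 * P + P * T^2 with hXdef
  set X' : H →L[ℂ] H := P * S^2 + S^2 * P with hX'def
  have hX : Adj A X X' := adj_add_s12 (adj_mul_s12 hP hT2) (adj_mul_s12 hT2 hP)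
  set wT2 : ℝ := sSup {r : ℝ | ∃ y : H, vnormA A y = 1 ∧ r = ‖(innA A ((T^2) y) y)‖}
    with hwT2def
  set wX : ℝ := sSup {r : ℝ | ∃ y : H, vnormA A y = 1 ∧ r = ‖(innA A (X y) y)‖}
    with hwXdef
  set nP : ℝ := sSup {r : ℝ | ∃ y : H, vnormA A y = 1 ∧ r = vnormA A (P y)} with hnPdef
  -- nonnegativity of the sups
  have hwT2nn : 0 ≤ wT2 :=
    le_trans (norm_nonneg _) (le_csSup (wA_bddAbove hsa hpos hstrict hT2) ⟨x, hx, rfl⟩)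
  have hwXnn : 0 ≤ wX :=
    le_trans (norm_nonneg _) (le_csSup (wA_bddAbove hsa hpos hstrict hX) ⟨x, hx, rfl⟩)
  have hnPnn : 0 ≤ nP :=
    le_trans (vnormA_nonneg _) (le_csSup (op_bddAbove hsa hpos hstrict hP) ⟨x, hx, rfl⟩)
  -- the unimodular scalar
  set t : ℂ := innA A (T x) x with ht
  set b : ℝ := ‖t‖ with hb
  have hbnn : 0 ≤ b := norm_nonneg t
  obtain ⟨c, hc1, hc2⟩ : ∃ c : ℂ, ‖c‖ = 1 ∧ (starRingEnd ℂ) c * t = ((b:ℝ):ℂ) := by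
    by_cases h0 : t = 0
    · exact ⟨1, by simp, by simp [h0, hb]⟩
    · refine ⟨t / ‖t‖, ?_, ?_⟩
      · rw [norm_div, Complex.norm_real, norm_norm, div_self ((norm_ne_zero_iff.mpr h0))]
      · rw [map_div₀, Complex.conj_ofReal, div_mul_eq_mul_div, mul_comm,
          Complex.mul_conj, Complex.normSq_eq_norm_sq, hb]
        push_cast
        rw [sq, mul_div_assoc, div_self (by exact_mod_cast (norm_ne_zero_iff.mpr h0)), mul_one]
  have hc3 : c * (starRingEnd ℂ) t = ((b:ℝ):ℂ) := by
    have h := congrArg (starRingEnd ℂ) hc2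
    rwa [map_mul, Complex.conj_conj, Complex.conj_ofReal] at h
  have hcc1 : c * (starRingEnd ℂ) c = 1 := by
    rw [Complex.mul_conj', hc1]
    norm_num
  have hcc2 : (starRingEnd ℂ) c * c = 1 := by rw [mul_comm]; exact hcc1
  -- the rotated operator
  set R : H →L[ℂ] H := c • T + (starRingEnd ℂ) c • S with hRdef
  have hR : Adj A R R := by
    have h1 := adj_smul_s12 (A := A) c hTS
    have h2 := adj_smul_s12 (A := A) ((starRingEnd ℂ) c) hST
    rw [Complex.conj_conj] at h2
    have := adj_add_s12 h1 h2
    rwa [add_comm ((starRingEnd ℂ) c • S) (c • T)] at this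
  have hR2 : Adj A (R * R) (R * R) := adj_mul_s12 hR hR
  have hSx : innA A (S x) x = (starRingEnd ℂ) t := adj_conj_innA hsa hTS x
  -- step 1 : ⟨ARx, x⟩ = 2b
  have step1 : innA A (R x) x = ((2*b : ℝ) : ℂ) := by
    have e1 : innA A (R x) x = (starRingEnd ℂ) c * t + c * (starRingEnd ℂ) t := by
      rw [hRdef, innA, ContinuousLinearMap.add_apply, ContinuousLinearMap.smul_apply,
        ContinuousLinearMap.smul_apply, map_add, map_smul, map_smul, inner_add_left,
        inner_smul_left, inner_smul_left, Complex.conj_conj, ← innA, ← innA, hSx, ← ht]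
    rw [e1, hc2, hc3]
    push_cast
    ring
  -- step 2 : 4 b^2 ≤ Re⟨A(R²x), x⟩
  have hm2eq : innA A ((R * R) x) x = innA A (R x) (R x) := innA_move hR x x
  have step2 : 4 * b^2 ≤ (innA A ((R * R) x) x).re := by
    have hcs := csA hsa hpos (R x) x
    rw [step1, Complex.norm_real, Real.norm_eq_abs, _root_.abs_of_nonneg (by linarith : (0:ℝ) ≤ 2*b),
      ← vnormA_sq hpos x, hx, one_pow, mul_one, ← hm2eq] at hcs
    calc 4 * b^2 = (2*b)^2 := by ring
      _ ≤ _ := hcs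
  have hm2nn : 0 ≤ (innA A ((R * R) x) x).re := le_trans (by positivity) step2
  -- step 3 : 16 b^4 ≤ Re⟨A(R⁴x), x⟩
  have hm4eq : innA A ((R * R * (R * R)) x) x = innA A ((R * R) x) ((R * R) x) :=
    innA_move hR2 x x
  have step3 : 16 * b^4 ≤ (innA A ((R * R * (R * R)) x) x).re := by
    have hcs := csA hsa hpos ((R * R) x) x
    rw [← vnormA_sq hpos x, hx, one_pow, mul_one, ← hm4eq] at hcs
    have h1 : (16:ℝ) * b^4 = (4 * b^2)^2 := by ring
    have h2 : (4 * b^2)^2 ≤ ((innA A ((R * R) x) x).re)^2 :=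
      pow_le_pow_left₀ (by positivity) step2 2
    have h3 : ((innA A ((R * R) x) x).re)^2 ≤ (‖(innA A ((R * R) x) x)‖)^2 :=
      pow_le_pow_left₀ hm2nn (Complex.re_le_norm _) 2
    linarith
  -- the algebraic decomposition R² = D + P
  set D : H →L[ℂ] H := (c^2) • (T^2) + ((starRingEnd ℂ) c^2) • (S^2) with hDdef
  have hD : Adj A D D := by
    have h1 := adj_smul_s12 (A := A) (c^2) hT2
    have h2 := adj_smul_s12 (A := A) ((starRingEnd ℂ) c^2) hS2
    rw [map_pow, Complex.conj_conj] at h2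
    rw [map_pow] at h1
    have := adj_add_s12 h1 h2
    rwa [add_comm ((starRingEnd ℂ) c ^ 2 • S^2) (c^2 • T^2)] at this
  have step4 : R * R = D + P := by
    rw [hRdef, hDdef, hPdef]
    rw [add_mul, mul_add, mul_add]
    rw [smul_mul_smul_comm, smul_mul_smul_comm, smul_mul_smul_comm, smul_mul_smul_comm]
    rw [hcc1, hcc2, one_smul, one_smul, ← pow_two, ← pow_two, ← pow_two, ← pow_two]
    abel
  have step5 : R * R * (R * R) = D * D + (D * P + P * D) + P * P := by
    rw [step4]
    noncomm_ring
  -- term 1 : Re⟨A(D²x),x⟩ ≤ 4 wT2²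
  have hDmove : innA A ((D * D) x) x = innA A (D x) (D x) := innA_move hD x x
  have hDle : vnormA A (D x) ≤
      sSup {r : ℝ | ∃ y : H, vnormA A y = 1 ∧ r = ‖(innA A (D y) y)‖} :=
    vnorm_apply_le_wA hsa hpos hstrict hD hx
  have hDw : sSup {r : ℝ | ∃ y : H, vnormA A y = 1 ∧ r = ‖(innA A (D y) y)‖}
      ≤ 2 * wT2 := by
    refine csSup_le ⟨‖(innA A (D x) x)‖, ⟨x, hx, rfl⟩⟩ ?_
    rintro r ⟨y, hy, rfl⟩
    have hDy : innA A (D y) y = (starRingEnd ℂ) (c^2) * innA A ((T^2) y) y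
        + (starRingEnd ℂ) ((starRingEnd ℂ) (c^2)) * innA A ((S^2) y) y := by
      rw [hDdef, innA, ContinuousLinearMap.add_apply, ContinuousLinearMap.smul_apply,
        ContinuousLinearMap.smul_apply, map_add, map_smul, map_smul, inner_add_left,
        inner_smul_left, inner_smul_left, ← innA, ← innA, map_pow]
    have hSy : innA A ((S^2) y) y = (starRingEnd ℂ) (innA A ((T^2) y) y) :=
      adj_conj_innA hsa hT2 y
    set μ : ℂ := innA A ((T^2) y) y with hμ
    rw [hSy, Complex.conj_conj] at hDy
    have habs : ‖(innA A (D y) y)‖ ≤ 2 * ‖μ‖ := by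
      rw [hDy]
      calc ‖((starRingEnd ℂ) (c^2) * μ + c^2 * (starRingEnd ℂ) μ)‖
          ≤ ‖((starRingEnd ℂ) (c^2) * μ)‖ + ‖(c^2 * (starRingEnd ℂ) μ)‖ :=
            norm_add_le _ _
        _ = 2 * ‖μ‖ := by
            rw [norm_mul, norm_mul, Complex.norm_conj, Complex.norm_conj, norm_pow, hc1]
            ring
    have hμle : ‖μ‖ ≤ wT2 :=
      le_csSup (wA_bddAbove hsa hpos hstrict hT2) ⟨y, hy, rfl⟩
    linarith
  have term1 : (innA A ((D * D) x) x).re ≤ 4 * wT2^2 := by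
    rw [hDmove, ← vnormA_sq hpos (D x)]
    have h1 : vnormA A (D x) ≤ 2 * wT2 := hDle.trans hDw
    calc (vnormA A (D x))^2 ≤ (2*wT2)^2 := pow_le_pow_left₀ (vnormA_nonneg _) h1 2
      _ = 4 * wT2^2 := by ring
  -- term 2
  have hDP : D * P + P * D = (c^2) • X + (((starRingEnd ℂ) c)^2) • X' := by
    simp only [hDdef, hXdef, hX'def, add_mul, mul_add, smul_mul_assoc, mul_smul_comm, smul_add]
    abel
  have term2 : (innA A ((D * P + P * D) x) x).re ≤ 2 * wX := by
    set ξ : ℂ := innA A (X x) x with hξ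
    have hXx : innA A (X' x) x = (starRingEnd ℂ) ξ := adj_conj_innA hsa hX x
    have e : innA A ((D * P + P * D) x) x
        = (starRingEnd ℂ) (c^2) * ξ + c^2 * (starRingEnd ℂ) ξ := by
      rw [hDP, innA, ContinuousLinearMap.add_apply, ContinuousLinearMap.smul_apply,
        ContinuousLinearMap.smul_apply, map_add, map_smul, map_smul, inner_add_left,
        inner_smul_left, inner_smul_left, ← innA, ← innA, hXx, map_pow, map_pow,
        Complex.conj_conj]
    have hre : (innA A ((D * P + P * D) x) x).re
        ≤ ‖(innA A ((D * P + P * D) x) x)‖ := Complex.re_le_norm _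
    have habs : ‖(innA A ((D * P + P * D) x) x)‖ ≤ 2 * ‖ξ‖ := by
      rw [e]
      calc ‖((starRingEnd ℂ) (c^2) * ξ + c^2 * (starRingEnd ℂ) ξ)‖
          ≤ ‖((starRingEnd ℂ) (c^2) * ξ)‖ + ‖(c^2 * (starRingEnd ℂ) ξ)‖ :=
            norm_add_le _ _
        _ = 2 * ‖ξ‖ := by
            rw [norm_mul, norm_mul, Complex.norm_conj, Complex.norm_conj, norm_pow, hc1]
            ring
    have hξle : ‖ξ‖ ≤ wX := le_csSup (wA_bddAbove hsa hpos hstrict hX) ⟨x, hx, rfl⟩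
    linarith
  -- term 3
  have term3 : (innA A ((P * P) x) x).re ≤ nP^2 := by
    rw [innA_move hP x x, ← vnormA_sq hpos (P x)]
    have h1 : vnormA A (P x) ≤ nP := le_csSup (op_bddAbove hsa hpos hstrict hP) ⟨x, hx, rfl⟩
    exact pow_le_pow_left₀ (vnormA_nonneg _) h1 2
  -- assemble
  have hsplit : (innA A ((R * R * (R * R)) x) x).re
      = (innA A ((D * D) x) x).re + (innA A ((D * P + P * D) x) x).re
        + (innA A ((P * P) x) x).re := by
    rw [step5, innA_add_left, innA_add_left]
    simp [Complex.add_re]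
  linarith [step3, term1, term2, term3]

end basic

theorem stmt12 (A T S : H →L[ℂ] H) (hA : StrictPos A) (hS : IsAAdjoint A T S) :
    (wA A T)^4 ≤ (1/4) * (wA A (T^2))^2 +
      (1/8) * wA A (T^2 * (S * T + T * S) + (S * T + T * S) * T^2) +
      (1/16) * (opNormA' A (S * T + T * S))^2 := by
  have hsa : ContinuousLinearMap.adjoint A = A := ContinuousLinearMap.isSelfAdjoint_iff'.mp hA.1.isSelfAdjoint
  have hpos : ∀ x : H, 0 ≤ (innA A x x).re := fun x => by
    have := hA.1.2 x
    simpa [ContinuousLinearMap.reApplyInnerSelf, innA] using this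
  have hstrict := hA.2
  have hTS : Adj A T S := hS
  by_cases hne : ∃ x₀ : H, vnormA A x₀ = 1
  · obtain ⟨x₀, hx₀⟩ := hne
    have hST : Adj A S T := adj_symm_s12 hsa hTS
    have hT2 : Adj A (T^2) (S^2) := by
      have := adj_mul_s12 hTS hTS; rwa [← pow_two, ← pow_two] at this
    have hP : Adj A (S*T + T*S) (S*T + T*S) := adj_add_s12 (adj_mul_s12 hTS hST) (adj_mul_s12 hST hTS)
    have hX : Adj A (T^2 * (S*T+T*S) + (S*T+T*S) * T^2) ((S*T+T*S) * S^2 + S^2 * (S*T+T*S)) :=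
      adj_add_s12 (adj_mul_s12 hP hT2) (adj_mul_s12 hT2 hP)
    have ew2 : wA A (T^2) = sSup {r : ℝ | ∃ y : H, vnormA A y = 1 ∧
        r = ‖(innA A ((T^2) y) y)‖} := rfl
    have ewX : wA A (T^2 * (S*T+T*S) + (S*T+T*S)*T^2) = sSup {r : ℝ | ∃ y : H,
        vnormA A y = 1 ∧ r = ‖
          (innA A ((T^2 * (S * T + T * S) + (S * T + T * S) * T^2) y) y)‖} := rfl
    have enP : opNormA' A (S*T+T*S) = sSup {r : ℝ | ∃ y : H, vnormA A y = 1 ∧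
        r = vnormA A ((S*T+T*S) y)} := rfl
    have hwT2nn : 0 ≤ wA A (T^2) := le_trans (norm_nonneg _)
      (le_csSup (wA_bddAbove hsa hpos hstrict hT2) ⟨x₀, hx₀, rfl⟩)
    have hwXnn : 0 ≤ wA A (T^2 * (S*T+T*S) + (S*T+T*S) * T^2) := le_trans (norm_nonneg _)
      (le_csSup (wA_bddAbove hsa hpos hstrict hX) ⟨x₀, hx₀, rfl⟩)
    have hnPnn : 0 ≤ opNormA' A (S*T+T*S) := le_trans (vnormA_nonneg _)
      (le_csSup (op_bddAbove hsa hpos hstrict hP) ⟨x₀, hx₀, rfl⟩)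
    set C : ℝ := (1/4) * (wA A (T^2))^2 +
      (1/8) * wA A (T^2 * (S * T + T * S) + (S * T + T * S) * T^2) +
      (1/16) * (opNormA' A (S * T + T * S))^2 with hC
    have hCnn : 0 ≤ C := by
      rw [hC]
      have : 0 ≤ (wA A (T^2))^2 := sq_nonneg _
      have : 0 ≤ (opNormA' A (S * T + T * S))^2 := sq_nonneg _
      positivity
    have hcore : ∀ r ∈ {r : ℝ | ∃ x : H, vnormA A x = 1 ∧ r = ‖(innA A (T x) x)‖},
        r ≤ Real.sqrt (Real.sqrt C) := by
      rintro r ⟨x, hx, rfl⟩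
      have h16 := core_ineq hsa hpos hstrict hTS hx
      rw [← ew2, ← ewX, ← enP] at h16
      have hb4 : (‖(innA A (T x) x)‖)^4 ≤ C := by rw [hC]; linarith
      have hbnn : 0 ≤ ‖(innA A (T x) x)‖ := norm_nonneg _
      have h1 := Real.sqrt_le_sqrt hb4
      rw [show (‖(innA A (T x) x)‖)^4 = ((‖(innA A (T x) x)‖)^2)^2 by ring,
        Real.sqrt_sq (sq_nonneg _)] at h1
      have h2 := Real.sqrt_le_sqrt h1
      rwa [Real.sqrt_sq hbnn] at h2
    have hwle : wA A T ≤ Real.sqrt (Real.sqrt C) :=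
      csSup_le ⟨_, ⟨x₀, hx₀, rfl⟩⟩ hcore
    have hwnn : 0 ≤ wA A T := le_trans (norm_nonneg _)
      (le_csSup (wA_bddAbove hsa hpos hstrict hTS) ⟨x₀, hx₀, rfl⟩)
    have h4 : (wA A T)^4 ≤ C := by
      have h1 : (wA A T)^2 ≤ (Real.sqrt (Real.sqrt C))^2 := pow_le_pow_left₀ hwnn hwle 2
      rw [Real.sq_sqrt (Real.sqrt_nonneg C)] at h1
      have h2 : ((wA A T)^2)^2 ≤ (Real.sqrt C)^2 := pow_le_pow_left₀ (sq_nonneg _) h1 2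
      rw [Real.sq_sqrt hCnn] at h2
      calc (wA A T)^4 = ((wA A T)^2)^2 := by ring
        _ ≤ C := h2
    exact h4
  · push_neg at hne
    have hempty : ∀ V : H →L[ℂ] H, wA A V = 0 := by
      intro V
      rw [wA, show {r : ℝ | ∃ x : H, vnormA A x = 1 ∧ r = ‖(innA A (V x) x)‖}
          = (∅ : Set ℝ) by
        ext r
        simp only [Set.mem_setOf_eq, Set.mem_empty_iff_false, iff_false, not_exists]
        rintro x ⟨hx, _⟩
        exact hne x hx]
      exact Real.sSup_empty
    have hempty' : opNormA' A (S*T+T*S) = 0 := by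
      rw [opNormA', show {r : ℝ | ∃ x : H, vnormA A x = 1 ∧ r = vnormA A ((S*T+T*S) x)}
          = (∅ : Set ℝ) by
        ext r
        simp only [Set.mem_setOf_eq, Set.mem_empty_iff_false, iff_false, not_exists]
        rintro x ⟨hx, _⟩
        exact hne x hx]
      exact Real.sSup_empty
    rw [hempty T, hempty (T^2), hempty (T^2 * (S * T + T * S) + (S * T + T * S) * T^2), hempty']
    norm_num
end
end
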